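/- arXiv:2502.15584 — 8 statements merged into one kernel-verified Lean document; each statement's English description precedes it below -/
import Mathlib

section
/- Let s ≥ 1 be an integer, μ ∈ ℝ, σ > 0, and let y_1,…,y_s be independent real Gaussian random variables each distributed N(μ, σ²). For every a with 0 < a < |μ|, P(min_{1≤i≤s} |y_i| > a) ≤ exp{ −(s/2) · ( e^{−2σ^{-2}(|μ|−a)²/π} − e^{−σ^{-2}(a+|μ|)²/2} ) / ( (1 − e^{−2σ^{-2}(|μ|−a)²/π})^{1/2} + (1 − e^{−σ^{-2}(a+|μ|)²/2})^{1/2} ) }. (Lemma S2.2(iii): upper bound on the probability that the minimum of i.i.d. folded Gaussians exceeds a level below the mean magnitude.) -/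
open MeasureTheory ProbabilityTheory

section ChuAux
open Real Set

noncomputable def dsk (r : ℝ) : Set (ℝ × ℝ) := {p | p.1^2 + p.2^2 < r^2}

lemma dsk_meas (r : ℝ) : MeasurableSet (dsk r) :=
  measurableSet_lt (by fun_prop) measurable_const

lemma polar_disk_integral (r : ℝ) (hr : 0 ≤ r) (g : ℝ → ℝ) (hg : Continuous g) :
    ∫ p : ℝ × ℝ, (dsk r).indicator (fun q => g (q.1^2 + q.2^2)) p
      = (2 * π) * ∫ ρ in (0:ℝ)..r, ρ * g (ρ^2) := by
  rw [← integral_comp_polarCoord_symm]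
  have h1 : ∀ p ∈ polarCoord.target,
      p.1 • (dsk r).indicator (fun q => g (q.1^2 + q.2^2)) (polarCoord.symm p)
        = ((Ioo (0:ℝ) r).indicator (fun ρ => ρ * g (ρ^2)) p.1) * (fun _ : ℝ => (1:ℝ)) p.2 := by
    rintro ⟨ρ, θ⟩ hp
    have hρ : 0 < ρ := hp.1
    have hsq : (polarCoord.symm (ρ, θ)).1 ^ 2 + (polarCoord.symm (ρ, θ)).2 ^ 2 = ρ ^ 2 := by
      simp only [polarCoord_symm_apply]
      ring_nf
      rw [← mul_add, Real.cos_sq_add_sin_sq]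
      ring
    by_cases hlt : ρ < r
    · have hmem : polarCoord.symm (ρ, θ) ∈ dsk r := by
        simp only [dsk, mem_setOf_eq, hsq]
        exact pow_lt_pow_left₀ hlt hρ.le two_ne_zero
      rw [Set.indicator_of_mem hmem, Set.indicator_of_mem (mem_Ioo.mpr ⟨hρ, hlt⟩)]
      rw [hsq]; simp
    · have hmem : polarCoord.symm (ρ, θ) ∉ dsk r := by
        simp only [dsk, mem_setOf_eq, hsq, not_lt]
        exact pow_le_pow_left₀ hr (not_lt.mp hlt) 2
      rw [Set.indicator_of_notMem hmem, Set.indicator_of_notMem (fun h => hlt h.2)]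
      simp
  rw [setIntegral_congr_fun polarCoord.open_target.measurableSet h1]
  rw [polarCoord_target, Measure.volume_eq_prod, ← Measure.prod_restrict]
  rw [integral_prod_mul (μ := volume.restrict (Ioi (0:ℝ)))
    (ν := volume.restrict (Ioo (-π) π))
    ((Ioo (0:ℝ) r).indicator (fun ρ => ρ * g (ρ^2))) (fun _ => (1:ℝ))]
  rw [integral_indicator measurableSet_Ioo]
  have : (Ioi (0:ℝ) : Set ℝ) ∩ Ioo 0 r = Ioo 0 r :=
    Set.inter_eq_self_of_subset_right Set.Ioo_subset_Ioi_self
  rw [Measure.restrict_restrict measurableSet_Ioo]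
  rw [Set.inter_comm, this]
  rw [setIntegral_const, smul_eq_mul, mul_one, measureReal_def, Real.volume_Ioo]
  rw [ENNReal.toReal_ofReal (by linarith [pi_pos] : (0:ℝ) ≤ π - -π)]
  rw [intervalIntegral.integral_of_le hr, ← integral_Ioc_eq_integral_Ioo]
  ring

lemma gauss_hasDeriv (ρ : ℝ) :
    HasDerivAt (fun x : ℝ => -Real.exp (-x^2/2)) (ρ * Real.exp (-ρ^2/2)) ρ := by
  have h1 : HasDerivAt (fun x : ℝ => -x^2/2) (-ρ) ρ := by
    have := ((hasDerivAt_pow 2 ρ).neg).div_const 2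
    exact this.congr_deriv (by norm_num; ring)
  have := (h1.exp).neg
  exact this.congr_deriv (by ring)

lemma integral_gauss_disk (r : ℝ) (hr : 0 ≤ r) :
    ∫ p : ℝ × ℝ in dsk r, Real.exp (-(p.1^2 + p.2^2)/2)
      = 2 * π * (1 - Real.exp (-r^2/2)) := by
  rw [← integral_indicator (dsk_meas r)]
  rw [polar_disk_integral r hr (fun t => Real.exp (-t/2)) (by fun_prop)]
  have : ∫ ρ in (0:ℝ)..r, ρ * Real.exp (-ρ^2/2)
      = (fun x : ℝ => -Real.exp (-x^2/2)) r - (fun x : ℝ => -Real.exp (-x^2/2)) 0 := by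
    apply intervalIntegral.integral_eq_sub_of_hasDerivAt
    · exact fun x _ => gauss_hasDeriv x
    · exact (Continuous.intervalIntegrable (by fun_prop) _ _)
  rw [this]; norm_num; ring

lemma volume_dsk (r : ℝ) (hr : 0 ≤ r) :
    volume (dsk r) = ENNReal.ofReal (π * r^2) := by
  have hsub : dsk r ⊆ Icc (-r) r ×ˢ Icc (-r) r := by
    rintro ⟨x, y⟩ h
    have hx2 : x^2 ≤ r^2 := by
      have := h; simp only [dsk, mem_setOf_eq] at this; nlinarith [sq_nonneg y]
    have hy2 : y^2 ≤ r^2 := by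
      have := h; simp only [dsk, mem_setOf_eq] at this; nlinarith [sq_nonneg x]
    refine ⟨⟨?_, ?_⟩, ?_, ?_⟩
    · nlinarith [sq_nonneg (x + r)]
    · nlinarith [sq_nonneg (x - r)]
    · nlinarith [sq_nonneg (y + r)]
    · nlinarith [sq_nonneg (y - r)]
  have hfin : volume (dsk r) ≠ ⊤ := by
    refine ne_top_of_le_ne_top ?_ (measure_mono hsub)
    rw [Measure.volume_eq_prod, Measure.prod_prod]
    exact ENNReal.mul_ne_top (by simp) (by simp)
  have h1 : ∫ p : ℝ × ℝ in dsk r, (1:ℝ) = π * r^2 := by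
    rw [← integral_indicator (dsk_meas r)]
    have := polar_disk_integral r hr (fun _ => (1:ℝ)) continuous_const
    simp only [mul_one] at this
    rw [this, integral_id]
    ring
  rw [setIntegral_const, smul_eq_mul, mul_one] at h1
  rw [← h1, measureReal_def, ENNReal.ofReal_toReal hfin]


noncomputable def Fδ (δ : ℝ) : ℝ := ∫ t in Ioc (-δ) δ, Real.exp (-t^2/2)

def Sq (δ : ℝ) : Set (ℝ × ℝ) := Ioc (-δ) δ ×ˢ Ioc (-δ) δ

lemma f2_integrable : Integrable (fun p : ℝ × ℝ => Real.exp (-(p.1^2 + p.2^2)/2)) := by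
  have h1 : Integrable (fun x : ℝ => Real.exp (-x^2/2)) := by
    have := integrable_exp_neg_mul_sq (b := (1/2 : ℝ)) (by norm_num)
    convert this using 2 with x
    ring_nf
  have h2 := (h1.mul_prod h1)
  rw [← Measure.volume_eq_prod] at h2
  convert h2 using 2 with p
  · rfl
  rw [← Real.exp_add]
  ring_nf

lemma Fδ_nonneg (δ : ℝ) : 0 ≤ Fδ δ :=
  setIntegral_nonneg measurableSet_Ioc (fun x _ => (Real.exp_pos _).le)

lemma sq_integral (δ : ℝ) :
    ∫ p : ℝ × ℝ in Sq δ, Real.exp (-(p.1^2 + p.2^2)/2) = (Fδ δ)^2 := by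
  have hcongr : ∀ p : ℝ × ℝ, Real.exp (-(p.1^2 + p.2^2)/2)
      = Real.exp (-p.1^2/2) * Real.exp (-p.2^2/2) := by
    intro p; rw [← Real.exp_add]; ring_nf
  simp_rw [Sq, hcongr, Measure.volume_eq_prod, ← Measure.prod_restrict]
  rw [integral_prod_mul (μ := volume.restrict (Ioc (-δ) δ))
    (ν := volume.restrict (Ioc (-δ) δ))
    (fun x => Real.exp (-x^2/2)) (fun x => Real.exp (-x^2/2))]
  rw [Fδ]; ring

lemma dsk_subset_Sq (δ : ℝ) (hδ : 0 ≤ δ) : dsk δ ⊆ Sq δ := by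
  rintro ⟨x, y⟩ h
  simp only [dsk, mem_setOf_eq] at h
  refine ⟨⟨?_, ?_⟩, ?_, ?_⟩
  · nlinarith [sq_nonneg (x + δ), sq_nonneg y]
  · nlinarith [sq_nonneg (x - δ), sq_nonneg y]
  · nlinarith [sq_nonneg (y + δ), sq_nonneg x]
  · nlinarith [sq_nonneg (y - δ), sq_nonneg x]

lemma chu_lower (δ : ℝ) (hδ : 0 ≤ δ) :
    Real.sqrt (2 * π) * Real.sqrt (1 - Real.exp (-δ^2/2)) ≤ Fδ δ := by
  have h1 : 2 * π * (1 - Real.exp (-δ^2/2)) ≤ (Fδ δ)^2 := by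
    rw [← integral_gauss_disk δ hδ, ← sq_integral δ]
    apply setIntegral_mono_set f2_integrable.integrableOn
    · exact Filter.Eventually.of_forall (fun p => (Real.exp_pos _).le)
    · exact HasSubset.Subset.eventuallyLE (dsk_subset_Sq δ hδ)
  calc Real.sqrt (2 * π) * Real.sqrt (1 - Real.exp (-δ^2/2))
      = Real.sqrt (2 * π * (1 - Real.exp (-δ^2/2))) := by
        rw [← Real.sqrt_mul (by positivity)]
    _ ≤ Real.sqrt ((Fδ δ)^2) := Real.sqrt_le_sqrt h1
    _ = Fδ δ := Real.sqrt_sq (Fδ_nonneg δ)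

lemma Sq_meas (δ : ℝ) : MeasurableSet (Sq δ) := measurableSet_Ioc.prod measurableSet_Ioc

lemma vol_Sq (δ : ℝ) (hδ : 0 ≤ δ) : volume (Sq δ) = ENNReal.ofReal (4 * δ^2) := by
  rw [Sq, Measure.volume_eq_prod, Measure.prod_prod, Real.volume_Ioc,
    ← ENNReal.ofReal_mul (by linarith)]
  congr 1; ring

lemma chu_upper (δ : ℝ) (hδ : 0 ≤ δ) :
    Fδ δ ≤ Real.sqrt (2 * π) * Real.sqrt (1 - Real.exp (-(2 * δ^2)/π)) := by
  set r : ℝ := 2 * δ / Real.sqrt π with hr_def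
  have hπ := pi_pos
  have hsπ : (0:ℝ) < Real.sqrt π := Real.sqrt_pos.mpr hπ
  have hr : 0 ≤ r := by positivity
  have hr2 : r^2 = 4 * δ^2 / π := by
    rw [hr_def, div_pow, Real.sq_sqrt hπ.le]; ring
  have hexp : Real.exp (-r^2/2) = Real.exp (-(2 * δ^2)/π) := by
    congr 1; rw [hr2]; field_simp; ring
  set f : ℝ × ℝ → ℝ := fun p => Real.exp (-(p.1^2 + p.2^2)/2) with hf_def
  set c : ℝ := Real.exp (-r^2/2) with hc_def
  have hS := Sq_meas δ
  have hD := dsk_meas r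
  have hvolD : volume (dsk r) = ENNReal.ofReal (4 * δ^2) := by
    rw [volume_dsk r hr, hr2]; congr 1; field_simp
  have hfinSD : volume (Sq δ \ dsk r) ≠ ⊤ :=
    ne_top_of_le_ne_top (by simp [vol_Sq δ hδ, ENNReal.mul_eq_top]) (measure_mono Set.diff_subset)
  have hfinDS : volume (dsk r \ Sq δ) ≠ ⊤ :=
    ne_top_of_le_ne_top (by simp [hvolD, ENNReal.mul_eq_top]) (measure_mono Set.diff_subset)
  have hfinI : volume (Sq δ ∩ dsk r) ≠ ⊤ :=
    ne_top_of_le_ne_top (by simp [vol_Sq δ hδ, ENNReal.mul_eq_top]) (measure_mono Set.inter_subset_left)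
  have hvol_eq : volume (Sq δ \ dsk r) = volume (dsk r \ Sq δ) := by
    have e1 := measure_inter_add_diff (μ := volume) (Sq δ) hD
    have e2 := measure_inter_add_diff (μ := volume) (dsk r) hS
    rw [Set.inter_comm] at e2
    have : volume (Sq δ ∩ dsk r) + volume (Sq δ \ dsk r)
        = volume (Sq δ ∩ dsk r) + volume (dsk r \ Sq δ) := by
      rw [e1, e2, vol_Sq δ hδ, hvolD]
    exact (ENNReal.add_right_inj hfinI).mp this
  have hbound1 : ∫ p in Sq δ \ dsk r, f p ≤ c * (volume (Sq δ \ dsk r)).toReal := by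
    have hle : ∀ p ∈ Sq δ \ dsk r, f p ≤ c := by
      rintro ⟨x, y⟩ hp
      have hnd : ¬ (x^2 + y^2 < r^2) := hp.2
      exact Real.exp_le_exp.mpr (by push_neg at hnd; simp only []; linarith)
    calc ∫ p in Sq δ \ dsk r, f p ≤ ∫ _ in Sq δ \ dsk r, c := by
          apply setIntegral_mono_on f2_integrable.integrableOn
            ((integrableOn_const_iff).mpr (Or.inr hfinSD.lt_top)) (hS.diff hD) hle
      _ = c * (volume (Sq δ \ dsk r)).toReal := by
          rw [setIntegral_const, smul_eq_mul, mul_comm, measureReal_def]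
  have hbound2 : c * (volume (dsk r \ Sq δ)).toReal ≤ ∫ p in dsk r \ Sq δ, f p := by
    have hle : ∀ p ∈ dsk r \ Sq δ, c ≤ f p := by
      rintro ⟨x, y⟩ hp
      have hd : x^2 + y^2 < r^2 := hp.1
      exact Real.exp_le_exp.mpr (by simp only []; linarith)
    calc c * (volume (dsk r \ Sq δ)).toReal = ∫ _ in dsk r \ Sq δ, c := by
          rw [setIntegral_const, smul_eq_mul, mul_comm, measureReal_def]
      _ ≤ ∫ p in dsk r \ Sq δ, f p := by
          apply setIntegral_mono_on ((integrableOn_const_iff).mpr (Or.inr hfinDS.lt_top))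
            f2_integrable.integrableOn (hD.diff hS) hle
  have hkey : (Fδ δ)^2 ≤ 2 * π * (1 - Real.exp (-r^2/2)) := by
    calc (Fδ δ)^2 = ∫ p in Sq δ, f p := (sq_integral δ).symm
      _ = (∫ p in Sq δ ∩ dsk r, f p) + ∫ p in Sq δ \ dsk r, f p :=
          (integral_inter_add_diff hD f2_integrable.integrableOn).symm
      _ ≤ (∫ p in Sq δ ∩ dsk r, f p) + c * (volume (Sq δ \ dsk r)).toReal := by
          linarith
      _ = (∫ p in Sq δ ∩ dsk r, f p) + c * (volume (dsk r \ Sq δ)).toReal := by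
          rw [hvol_eq]
      _ ≤ (∫ p in Sq δ ∩ dsk r, f p) + ∫ p in dsk r \ Sq δ, f p := by linarith
      _ = (∫ p in dsk r ∩ Sq δ, f p) + ∫ p in dsk r \ Sq δ, f p := by
          rw [Set.inter_comm]
      _ = ∫ p in dsk r, f p := integral_inter_add_diff hS f2_integrable.integrableOn
      _ = 2 * π * (1 - Real.exp (-r^2/2)) := integral_gauss_disk r hr
  calc Fδ δ = Real.sqrt ((Fδ δ)^2) := (Real.sqrt_sq (Fδ_nonneg δ)).symm
    _ ≤ Real.sqrt (2 * π * (1 - Real.exp (-r^2/2))) := Real.sqrt_le_sqrt hkey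
    _ = Real.sqrt (2 * π) * Real.sqrt (1 - Real.exp (-(2 * δ^2)/π)) := by
        rw [← hexp, Real.sqrt_mul (by positivity)]

noncomputable def Gd (δ : ℝ) : ℝ := ∫ u in (0:ℝ)..δ, Real.exp (-u^2/2)

lemma g_intble (A B : ℝ) : IntervalIntegrable (fun u : ℝ => Real.exp (-u^2/2)) volume A B :=
  Continuous.intervalIntegrable (by fun_prop) _ _

lemma Fδ_eq_two_Gd (δ : ℝ) (hδ : 0 ≤ δ) : Fδ δ = 2 * Gd δ := by
  rw [Fδ, ← intervalIntegral.integral_of_le (by linarith : -δ ≤ δ)]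
  have hsplit := intervalIntegral.integral_add_adjacent_intervals
    (g_intble (-δ) 0) (g_intble 0 δ)
  have hneg : (∫ u in (-δ:ℝ)..0, Real.exp (-u^2/2)) = Gd δ := by
    rw [Gd]
    have := intervalIntegral.integral_comp_neg (a := (0:ℝ)) (b := δ)
      (fun u : ℝ => Real.exp (-u^2/2))
    simp only [neg_neg, neg_zero] at this ⊢
    rw [← this]
    congr 1; ext u; ring_nf
  rw [← hsplit, hneg, Gd]; ring

lemma Gd_sub (δ₁ δ₂ : ℝ) :
    Gd δ₂ - Gd δ₁ = ∫ u in δ₁..δ₂, Real.exp (-u^2/2) :=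
  intervalIntegral.integral_interval_sub_left (g_intble 0 δ₂) (g_intble 0 δ₁)

lemma gauss_icc (m σ a : ℝ) (hσ : 0 < σ) (ha0 : 0 < a) (ham : a < |m|) :
    ∫ x in Icc (-a) a, ProbabilityTheory.gaussianPDFReal m (Real.toNNReal (σ^2)) x
      = (Gd ((a + |m|)/σ) - Gd ((|m| - a)/σ)) / Real.sqrt (2 * π) := by
  have hvr : ((Real.toNNReal (σ^2) : NNReal) : ℝ) = σ^2 := Real.coe_toNNReal _ (sq_nonneg σ)
  have hπ := pi_pos
  rw [integral_Icc_eq_integral_Ioc, ← intervalIntegral.integral_of_le (by linarith : -a ≤ a)]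
  simp_rw [ProbabilityTheory.gaussianPDFReal_def, hvr]
  rw [intervalIntegral.integral_const_mul]
  have hstep : ∀ x : ℝ, Real.exp (-(x - m)^2 / (2 * σ^2))
      = (fun u : ℝ => Real.exp (-u^2/2)) ((x - m) / σ) := by
    intro x
    have h : -(x - m)^2 / (2 * σ^2) = -((x - m)/σ)^2/2 := by
      field_simp
    rw [h]
  simp_rw [hstep]
  have hcomp : (∫ x in (-a)..a, (fun u : ℝ => Real.exp (-u^2/2)) ((x - m) / σ))
      = σ * ∫ u in ((-a - m)/σ)..((a - m)/σ), Real.exp (-u^2/2) := by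
    have h1 := intervalIntegral.integral_comp_sub_right
      (a := -a) (b := a) (fun y : ℝ => Real.exp (-(y/σ)^2/2)) m
    have h2 := intervalIntegral.integral_comp_div
      (a := -a - m) (b := a - m) (c := σ) (f := fun u : ℝ => Real.exp (-u^2/2)) hσ.ne'
    simp only [smul_eq_mul] at h2
    calc (∫ x in (-a)..a, (fun u : ℝ => Real.exp (-u^2/2)) ((x - m) / σ))
        = ∫ x in (-a)..a, (fun y : ℝ => Real.exp (-(y/σ)^2/2)) (x - m) := by
          congr 1
      _ = ∫ y in (-a - m)..(a - m), Real.exp (-(y/σ)^2/2) := h1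
      _ = σ * ∫ u in ((-a - m)/σ)..((a - m)/σ), Real.exp (-u^2/2) := h2
  rw [hcomp]
  have hJ : (∫ u in ((-a - m)/σ)..((a - m)/σ), Real.exp (-u^2/2))
      = ∫ u in ((|m| - a)/σ)..((a + |m|)/σ), Real.exp (-u^2/2) := by
    rcases le_or_gt 0 m with hm | hm
    · rw [abs_of_nonneg hm]
      have hnegint := intervalIntegral.integral_comp_neg (a := (m - a)/σ) (b := (a + m)/σ)
        (fun u : ℝ => Real.exp (-u^2/2))
      simp only [even_two.neg_pow] at hnegint
      calc (∫ u in ((-a - m)/σ)..((a - m)/σ), Real.exp (-u^2/2))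
          = ∫ u in (-((a + m)/σ))..(-((m - a)/σ)), Real.exp (-u^2/2) := by
            congr 1 <;> ring
        _ = ∫ u in ((m - a)/σ)..((a + m)/σ), Real.exp (-u^2/2) := hnegint.symm
    · rw [abs_of_neg hm]
      congr 1 <;> ring
  rw [hJ, ← Gd_sub]
  have hsq : Real.sqrt (2 * π * σ^2) = Real.sqrt (2 * π) * σ := by
    rw [Real.sqrt_mul (by positivity), Real.sqrt_sq hσ.le]
  rw [hsq]
  have h2π : Real.sqrt (2 * π) ≠ 0 := by positivity
  field_simp

lemma gauss_tail (m σ a : ℝ) (hσ : 0 < σ) (ha0 : 0 < a) (ham : a < |m|) :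
    (ProbabilityTheory.gaussianReal m (Real.toNNReal (σ^2)) {x : ℝ | a < |x|}).toReal ≤
      Real.exp (-((Real.sqrt (1 - Real.exp (-((a + |m|) ^ 2) / (2 * σ ^ 2)))
        - Real.sqrt (1 - Real.exp (-(2 * (|m| - a) ^ 2) / (Real.pi * σ ^ 2)))) / 2)) := by
  have hπ := pi_pos
  set δ₁ : ℝ := (|m| - a)/σ with hδ₁_def
  set δ₂ : ℝ := (a + |m|)/σ with hδ₂_def
  have hδ₁ : 0 ≤ δ₁ := by
    rw [hδ₁_def]; apply div_nonneg (by linarith) hσ.le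
  have hδ₂ : 0 ≤ δ₂ := by
    rw [hδ₂_def]; apply div_nonneg (by linarith [abs_nonneg m]) hσ.le
  have harg1 : -(2 * δ₁^2)/π = -(2 * (|m| - a) ^ 2) / (π * σ ^ 2) := by
    rw [hδ₁_def, div_pow, neg_div, neg_div]
    congr 1
    rw [mul_div_assoc', div_div, mul_comm (σ^2) π]
  have harg2 : -δ₂^2/2 = -((a + |m|) ^ 2) / (2 * σ ^ 2) := by
    rw [hδ₂_def, div_pow, neg_div, neg_div]
    congr 1
    rw [div_div, mul_comm (σ^2) 2]
  have hv : Real.toNNReal (σ^2) ≠ 0 := by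
    simp only [ne_eq, Real.toNNReal_eq_zero, not_le]
    positivity
  -- the complement set
  have hcompl : ({x : ℝ | a < |x|} : Set ℝ) = (Icc (-a) a)ᶜ := by
    ext x
    simp only [mem_setOf_eq, mem_compl_iff, mem_Icc, not_and_or, not_le]
    constructor
    · intro h
      rcases lt_or_ge x 0 with hx | hx
      · left; rw [abs_of_neg hx] at h; linarith
      · right; rw [abs_of_nonneg hx] at h; linarith
    · intro h
      rcases h with h | h
      · rw [abs_of_neg (by linarith)]; linarith
      · rw [abs_of_nonneg (by linarith)]; linarith
  set μG := ProbabilityTheory.gaussianReal m (Real.toNNReal (σ^2)) with hμG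
  have hIq_nonneg : 0 ≤ ∫ x in Icc (-a) a,
      ProbabilityTheory.gaussianPDFReal m (Real.toNNReal (σ^2)) x :=
    setIntegral_nonneg measurableSet_Icc
      (fun x _ => ProbabilityTheory.gaussianPDFReal_nonneg _ _ _)
  have hq : μG (Icc (-a) a) = ENNReal.ofReal (∫ x in Icc (-a) a,
      ProbabilityTheory.gaussianPDFReal m (Real.toNNReal (σ^2)) x) :=
    ProbabilityTheory.gaussianReal_apply_eq_integral m hv _
  set Iq : ℝ := ∫ x in Icc (-a) a,
      ProbabilityTheory.gaussianPDFReal m (Real.toNNReal (σ^2)) x with hIq_def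
  have hptoReal : (μG {x : ℝ | a < |x|}).toReal = 1 - Iq := by
    rw [hcompl, measure_compl measurableSet_Icc (measure_ne_top _ _)]
    rw [measure_univ, hq, ENNReal.toReal_sub_of_le _ (by simp), ENNReal.toReal_one,
      ENNReal.toReal_ofReal hIq_nonneg]
    · exact ENNReal.ofReal_le_one.mpr (by
        have := hq ▸ prob_le_one (μ := μG) (s := Icc (-a) a)
        exact_mod_cast ENNReal.ofReal_le_one.mp (hq ▸ prob_le_one))
  have h2π : (0:ℝ) < Real.sqrt (2 * π) := Real.sqrt_pos.mpr (by positivity)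
  set A : ℝ := 1 - Real.exp (-(2 * (|m| - a) ^ 2) / (π * σ ^ 2)) with hA_def
  set B : ℝ := 1 - Real.exp (-((a + |m|) ^ 2) / (2 * σ ^ 2)) with hB_def
  have hchu1 : Real.sqrt (2 * π) * Real.sqrt B ≤ 2 * Gd δ₂ := by
    have := chu_lower δ₂ hδ₂
    rw [Fδ_eq_two_Gd δ₂ hδ₂] at this
    rw [hB_def, ← harg2]
    exact this
  have hchu2 : 2 * Gd δ₁ ≤ Real.sqrt (2 * π) * Real.sqrt A := by
    have := chu_upper δ₁ hδ₁
    rw [Fδ_eq_two_Gd δ₁ hδ₁] at this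
    rw [hA_def, ← harg1]
    exact this
  have hIq_eq : Iq = (Gd δ₂ - Gd δ₁) / Real.sqrt (2 * π) :=
    gauss_icc m σ a hσ ha0 ham
  have hIq_ge : (Real.sqrt B - Real.sqrt A) / 2 ≤ Iq := by
    rw [hIq_eq, le_div_iff₀ h2π]
    nlinarith [hchu1, hchu2]
  rw [hptoReal]
  have hexp := Real.add_one_le_exp (-((Real.sqrt B - Real.sqrt A) / 2))
  linarith

end ChuAux

/-- **Lemma S2.2(iii).** Upper bound on the probability that the minimum of `s ≥ 1`
i.i.d. folded Gaussians `|y_i|`, `y_i ~ N(μ, σ²)`, exceeds a level `a` with `0 < a < |μ|`: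
`P(min_i |y_i| > a) ≤ exp{−(s/2)·(e^{−2σ⁻²(|μ|−a)²/π} − e^{−σ⁻²(a+|μ|)²/2}) /
((1 − e^{−2σ⁻²(|μ|−a)²/π})^{1/2} + (1 − e^{−σ⁻²(a+|μ|)²/2})^{1/2})}`. -/
theorem stmt3 {Ω : Type*} [MeasurableSpace Ω] (P : Measure Ω) [IsProbabilityMeasure P]
    (s : ℕ) (hs : 1 ≤ s) (m σ : ℝ) (hσ : 0 < σ)
    (y : Fin s → Ω → ℝ) (hmeas : ∀ i, Measurable (y i))
    (hindep : iIndepFun y P)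
    (hlaw : ∀ i, Measure.map (y i) P = gaussianReal m (Real.toNNReal (σ ^ 2)))
    (a : ℝ) (ha0 : 0 < a) (ham : a < |m|) :
    (P {ω | ∀ i, a < |y i ω|}).toReal ≤
      Real.exp (-((s : ℝ) / 2) *
        ((Real.exp (-(2 * (|m| - a) ^ 2) / (Real.pi * σ ^ 2)) -
            Real.exp (-((a + |m|) ^ 2) / (2 * σ ^ 2))) /
          (Real.sqrt (1 - Real.exp (-(2 * (|m| - a) ^ 2) / (Real.pi * σ ^ 2))) +
            Real.sqrt (1 - Real.exp (-((a + |m|) ^ 2) / (2 * σ ^ 2)))))) := by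
  have hπ := Real.pi_pos
  set S : Set ℝ := {x : ℝ | a < |x|} with hS_def
  have hSmeas : MeasurableSet S := measurableSet_lt measurable_const continuous_abs.measurable
  have hset : {ω | ∀ i, a < |y i ω|} = ⋂ i, (y i) ⁻¹' S := by
    ext ω; simp [hS_def, Set.mem_iInter]
  set p : ENNReal := ProbabilityTheory.gaussianReal m (Real.toNNReal (σ ^ 2)) S with hp_def
  have hprod : P {ω | ∀ i, a < |y i ω|} = p ^ s := by
    rw [hset, hindep.meas_iInter (fun i => ⟨S, hSmeas, rfl⟩)]
    have hone : ∀ i : Fin s, P ((y i) ⁻¹' S) = p := by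
      intro i
      rw [hp_def, ← hlaw i, Measure.map_apply (hmeas i) hSmeas]
    simp_rw [hone]
    simp [Finset.prod_const]
  set A' : ℝ := Real.exp (-(2 * (|m| - a) ^ 2) / (Real.pi * σ ^ 2)) with hA'_def
  set B' : ℝ := Real.exp (-((a + |m|) ^ 2) / (2 * σ ^ 2)) with hB'_def
  set c : ℝ := (Real.sqrt (1 - B') - Real.sqrt (1 - A')) / 2 with hc_def
  have hptail : p.toReal ≤ Real.exp (-c) := gauss_tail m σ a hσ ha0 ham
  have hA'le : A' ≤ 1 := Real.exp_le_one_iff.mpr (by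
    apply div_nonpos_of_nonpos_of_nonneg
    · nlinarith [sq_nonneg (|m| - a)]
    · positivity)
  have hB'lt : B' < 1 := by
    rw [hB'_def, Real.exp_lt_one_iff]
    apply div_neg_of_neg_of_pos
    · have h : 0 < a + |m| := by linarith [abs_nonneg m]
      nlinarith [h]
    · positivity
  have hsqB : 0 < Real.sqrt (1 - B') := Real.sqrt_pos.mpr (by linarith)
  have hsqA : 0 ≤ Real.sqrt (1 - A') := Real.sqrt_nonneg _
  have hident : (A' - B') / (Real.sqrt (1 - A') + Real.sqrt (1 - B'))
      = Real.sqrt (1 - B') - Real.sqrt (1 - A') := by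
    rw [div_eq_iff (by linarith : Real.sqrt (1 - A') + Real.sqrt (1 - B') ≠ 0)]
    have h1 := Real.sq_sqrt (by linarith : (0:ℝ) ≤ 1 - A')
    have h2 := Real.sq_sqrt (by linarith : (0:ℝ) ≤ 1 - B')
    nlinarith [h1, h2]
  have hrw : -((s : ℝ) / 2) * ((A' - B') / (Real.sqrt (1 - A') + Real.sqrt (1 - B')))
      = (s : ℝ) * (-c) := by
    rw [hident, hc_def]; ring
  rw [hprod, hrw, Real.exp_nat_mul, ENNReal.toReal_pow]
  apply pow_le_pow_left₀ ENNReal.toReal_nonneg hptail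
end

section
/- In the Gaussian sequence model with block structure, assume A1, A2, A3, and Assumption A4: for every j and every sufficiently large n, √n τ_j ≥ √(2 ln(p_j − s_j)). Then P(Ŝ^b ⊆ S) → 1 as n → ∞. (Proposition 3.2(i): no false positives asymptotically.) -/
open MeasureTheory ProbabilityTheory Filter Finset
open scoped NNReal
open scoped ENNReal
open Real

/-- Number of truly inactive coordinates in block `j` (that is, `p_j − s_j`). -/
noncomputable def inactJ {P b : ℕ} (blk : Fin P → Fin b) (βs : Fin P → ℝ) (j : Fin b) : ℕ :=
  (Finset.univ.filter (fun i => blk i = j ∧ βs i = 0)).card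

/-- Number of truly active coordinates in block `j` (that is, `s_j`). -/
noncomputable def actJ {P b : ℕ} (blk : Fin P → Fin b) (βs : Fin P → ℝ) (j : Fin b) : ℕ :=
  (Finset.univ.filter (fun i => blk i = j ∧ βs i ≠ 0)).card

lemma int_Ioi_mul_exp {b : ℝ} (hb : 0 < b) (t : ℝ) :
    ∫ x in Set.Ioi t, x * Real.exp (-b * x ^ 2) = Real.exp (-b * t ^ 2) / (2 * b) := by
  have hderiv : ∀ x ∈ Set.Ici t, HasDerivAt (fun y => -Real.exp (-b * y ^ 2) / (2 * b))
      (x * Real.exp (-b * x ^ 2)) x := by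
    intro x _
    have h1 : HasDerivAt (fun y : ℝ => -b * y ^ 2) (-b * (2 * x)) x := by
      simpa using ((hasDerivAt_pow 2 x).const_mul (-b))
    have h2 := (h1.exp).neg.div_const (2 * b)
    refine h2.congr_deriv ?_
    rw [div_eq_iff (by positivity)]
    ring
  have hint : IntegrableOn (fun x => x * Real.exp (-b * x ^ 2)) (Set.Ioi t) :=
    (integrable_mul_exp_neg_mul_sq hb).integrableOn
  have htend : Tendsto (fun y => -Real.exp (-b * y ^ 2) / (2 * b)) atTop (nhds 0) := by
    have h3 : Tendsto (fun y : ℝ => -b * y ^ 2) atTop atBot := by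
      have := (tendsto_pow_atTop (two_ne_zero : (2:ℕ) ≠ 0)).const_mul_atTop hb
      simpa [neg_mul] using tendsto_neg_atBot_iff.mpr this
    have h4 := (Real.tendsto_exp_atBot.comp h3).neg.div_const (2 * b)
    simpa using h4
  have := integral_Ioi_of_hasDerivAt_of_tendsto' hderiv hint htend
  rw [this]
  ring

lemma gauss_Ioi_le (v : ℝ≥0) (hv : v ≠ 0) {t : ℝ} (ht : 0 < t) :
    gaussianReal 0 v (Set.Ioi t) ≤
      ENNReal.ofReal ((Real.sqrt (2 * π * v))⁻¹ * ((v : ℝ) / t) * Real.exp (-t ^ 2 / (2 * v))) := by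
  have hv' : (0 : ℝ) < v := lt_of_le_of_ne (v.coe_nonneg) (by exact_mod_cast (Ne.symm hv))
  set c : ℝ := (Real.sqrt (2 * π * v))⁻¹ with hc
  have hcpos : 0 < c := by
    rw [hc]
    have : 0 < Real.sqrt (2 * π * v) := Real.sqrt_pos.mpr (by positivity)
    positivity
  set b : ℝ := (2 * v)⁻¹ with hbdef
  have hb : 0 < b := by positivity
  rw [gaussianReal_apply_eq_integral _ hv]
  apply ENNReal.ofReal_le_ofReal
  have hmono : ∫ x in Set.Ioi t, gaussianPDFReal 0 v x ≤
      ∫ x in Set.Ioi t, c * t⁻¹ * (x * Real.exp (-b * x ^ 2)) := by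
    apply setIntegral_mono_on
    · exact (integrable_gaussianPDFReal 0 v).integrableOn
    · exact (((integrable_mul_exp_neg_mul_sq hb).const_mul _)).integrableOn
    · exact measurableSet_Ioi
    · intro x hx
      have hx' : t < x := hx
      have hxpos : 0 < x := ht.trans hx'
      have h1 : (1 : ℝ) ≤ x / t := (one_le_div ht).mpr hx'.le
      have hexp : Real.exp (- (x - 0) ^ 2 / (2 * v)) = Real.exp (-b * x ^ 2) := by
        rw [hbdef]; congr 1; field_simp; ring
      rw [gaussianPDFReal, hexp]
      calc c * Real.exp (-b * x ^ 2) = c * 1 * Real.exp (-b * x ^ 2) := by ring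
        _ ≤ c * (x / t) * Real.exp (-b * x ^ 2) := by
            apply mul_le_mul_of_nonneg_right _ (Real.exp_nonneg _)
            exact mul_le_mul_of_nonneg_left h1 hcpos.le
        _ = c * t⁻¹ * (x * Real.exp (-b * x ^ 2)) := by ring
  refine hmono.trans ?_
  rw [integral_const_mul, int_Ioi_mul_exp hb]
  have h2b : 2 * b = (v : ℝ)⁻¹ := by rw [hbdef]; field_simp
  have hE : -b * t ^ 2 = -t ^ 2 / (2 * v) := by rw [hbdef]; field_simp
  rw [hE, h2b]
  apply le_of_eq
  have hvne : ((v:ℝ))⁻¹ ≠ 0 := by positivity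
  rw [div_eq_mul_inv, inv_inv]
  ring

lemma gauss_tail_le (v : ℝ≥0) (hv : v ≠ 0) {t : ℝ} (ht : 0 < t) :
    gaussianReal 0 v {x : ℝ | t < |x|} ≤
      ENNReal.ofReal (2 * (Real.sqrt (2 * π * v))⁻¹ * ((v : ℝ) / t) *
        Real.exp (-t ^ 2 / (2 * v))) := by
  set ν := gaussianReal 0 v with hν
  -- symmetry
  have hmap : ν.map (fun x : ℝ => (-1 : ℝ) * x) = ν := by
    rw [hν]
    have h := gaussianReal_map_const_mul (μ := 0) (v := v) (-1 : ℝ)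
    have h1 : (⟨(-1 : ℝ) ^ 2, sq_nonneg _⟩ : ℝ≥0) = 1 := by ext; norm_num
    rw [mul_zero] at h
    rw [h]; congr 1; rw [← one_mul v]; congr 1; ext; norm_num
  have hsym : ν (Set.Iio (-t)) = ν (Set.Ioi t) := by
    conv_lhs => rw [← hmap]
    rw [Measure.map_apply (measurable_const_mul _) measurableSet_Iio]
    congr 1
    ext x
    simp [neg_one_mul, Set.mem_Iio, Set.mem_Ioi, neg_lt_neg_iff]
  have hsub : {x : ℝ | t < |x|} ⊆ Set.Iio (-t) ∪ Set.Ioi t := by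
    intro x hx
    have hx' : t < |x| := hx
    rcases le_or_gt x 0 with h | h
    · left
      have : |x| = -x := abs_of_nonpos h
      rw [this] at hx'
      simpa [Set.mem_Iio] using by linarith
    · right
      have : |x| = x := abs_of_pos h
      rw [this] at hx'
      exact hx'
  calc ν {x : ℝ | t < |x|} ≤ ν (Set.Iio (-t) ∪ Set.Ioi t) := measure_mono hsub
    _ ≤ ν (Set.Iio (-t)) + ν (Set.Ioi t) := measure_union_le _ _
    _ = ν (Set.Ioi t) + ν (Set.Ioi t) := by rw [hsym]
    _ ≤ ENNReal.ofReal ((Real.sqrt (2 * π * v))⁻¹ * ((v : ℝ) / t) * Real.exp (-t ^ 2 / (2 * v)))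
        + ENNReal.ofReal ((Real.sqrt (2 * π * v))⁻¹ * ((v : ℝ) / t) *
          Real.exp (-t ^ 2 / (2 * v))) := add_le_add (gauss_Ioi_le v hv ht) (gauss_Ioi_le v hv ht)
    _ = ENNReal.ofReal (2 * (Real.sqrt (2 * π * v))⁻¹ * ((v : ℝ) / t) *
          Real.exp (-t ^ 2 / (2 * v))) := by
        rw [← ENNReal.ofReal_add]
        · congr 1; ring
        all_goals positivity

lemma block_bound {n m : ℕ} (hn : 1 ≤ n) (hm : 3 ≤ m) {t : ℝ} (ht : 0 < t)
    (hA4 : Real.sqrt (2 * Real.log m) ≤ Real.sqrt n * t) :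
    (m : ℝ) * (2 * (Real.sqrt (2 * π * ((n : ℝ))⁻¹))⁻¹ * (((n : ℝ))⁻¹ / t) *
      Real.exp (-t ^ 2 / (2 * ((n : ℝ))⁻¹))) ≤ (Real.sqrt (Real.log m))⁻¹ := by
  have hnpos : (0 : ℝ) < n := by exact_mod_cast hn
  have hmpos : (0 : ℝ) < m := by positivity
  have hlog : (1 : ℝ) ≤ Real.log m := by
    rw [Real.le_log_iff_exp_le hmpos]
    calc Real.exp 1 ≤ 3 := le_of_lt (lt_trans Real.exp_one_lt_d9 (by norm_num))
      _ ≤ m := by exact_mod_cast hm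
  set L : ℝ := Real.sqrt (2 * Real.log m) with hL
  have hLpos : 0 < L := Real.sqrt_pos.mpr (by linarith)
  set c : ℝ := Real.sqrt n * t with hcdef
  have hcpos : 0 < c := mul_pos (Real.sqrt_pos.mpr hnpos) ht
  -- exp bound
  have hexp1 : Real.exp (-t ^ 2 / (2 * ((n : ℝ))⁻¹)) = Real.exp (-c ^ 2 / 2) := by
    congr 1
    rw [hcdef, mul_pow, Real.sq_sqrt hnpos.le]
    field_simp
  have hexp2 : Real.exp (-c ^ 2 / 2) ≤ (m : ℝ)⁻¹ := by
    have h1 : L ^ 2 ≤ c ^ 2 := pow_le_pow_left₀ hLpos.le hA4 2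
    have h2 : L ^ 2 = 2 * Real.log m := Real.sq_sqrt (by linarith)
    calc Real.exp (-c ^ 2 / 2) ≤ Real.exp (-L ^ 2 / 2) :=
          Real.exp_le_exp.mpr (by linarith)
      _ = (m : ℝ)⁻¹ := by
          rw [h2]
          rw [show -(2 * Real.log m) / 2 = -Real.log m by ring, Real.exp_neg,
            Real.exp_log hmpos]
  -- sqrt bound: (√(2π/n))⁻¹ ≤ √n/√2
  have hsq : (Real.sqrt (2 * π * ((n : ℝ))⁻¹))⁻¹ ≤ Real.sqrt n / Real.sqrt 2 := by
    have h1 : Real.sqrt 2 / Real.sqrt n ≤ Real.sqrt (2 * π * ((n : ℝ))⁻¹) := by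
      rw [show Real.sqrt 2 / Real.sqrt n = Real.sqrt (2 / n) from
        (Real.sqrt_div (by norm_num) n).symm]
      apply Real.sqrt_le_sqrt
      rw [div_eq_mul_inv]
      have hπ : (1 : ℝ) ≤ π := by linarith [Real.pi_gt_three]
      nlinarith [inv_pos.mpr hnpos]
    have h2 : 0 < Real.sqrt 2 / Real.sqrt n := by positivity
    calc (Real.sqrt (2 * π * ((n : ℝ))⁻¹))⁻¹ ≤ (Real.sqrt 2 / Real.sqrt n)⁻¹ :=
          inv_anti₀ h2 h1
      _ = Real.sqrt n / Real.sqrt 2 := by rw [inv_div]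
  rw [hexp1]
  set E := Real.exp (-c ^ 2 / 2) with hEdef
  have hE0 : 0 ≤ E := Real.exp_nonneg _
  set I := (Real.sqrt (2 * π * ((n : ℝ))⁻¹))⁻¹ with hIdef
  have hI0 : 0 ≤ I := by positivity
  set s := Real.sqrt n with hsdef
  set r := Real.sqrt 2 with hrdef
  have hs0 : 0 < s := Real.sqrt_pos.mpr hnpos
  have hr0 : 0 < r := Real.sqrt_pos.mpr (by norm_num)
  have hstep1 : (m : ℝ) * (2 * I * (((n : ℝ))⁻¹ / t) * E) ≤
      (m : ℝ) * (2 * (s / r) * (((n : ℝ))⁻¹ / t) * E) := by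
    apply mul_le_mul_of_nonneg_left _ hmpos.le
    apply mul_le_mul_of_nonneg_right _ hE0
    apply mul_le_mul_of_nonneg_right _ (by positivity)
    linarith [hsq]
  have hid : (m : ℝ) * (2 * (s / r) * (((n : ℝ))⁻¹ / t) * E) = r * c⁻¹ * ((m : ℝ) * E) := by
    rw [hcdef]
    rw [show ((n : ℝ)) = s * s from (Real.mul_self_sqrt hnpos.le).symm]
    rw [show (2 : ℝ) = r * r from (Real.mul_self_sqrt (by norm_num)).symm]
    field_simp
  have hmE : (m : ℝ) * E ≤ 1 := by
    calc (m : ℝ) * E ≤ (m : ℝ) * (m : ℝ)⁻¹ := mul_le_mul_of_nonneg_left hexp2 hmpos.le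
      _ = 1 := mul_inv_cancel₀ hmpos.ne'
  have hstep2 : r * c⁻¹ * ((m : ℝ) * E) ≤ r * c⁻¹ * 1 :=
    mul_le_mul_of_nonneg_left hmE (by positivity)
  have hstep3 : r * c⁻¹ * 1 ≤ r * L⁻¹ := by
    rw [mul_one]
    exact mul_le_mul_of_nonneg_left (inv_anti₀ hLpos hA4) hr0.le
  have hfinal : r * L⁻¹ = (Real.sqrt (Real.log m))⁻¹ := by
    rw [hL, Real.sqrt_mul (by norm_num : (0:ℝ) ≤ 2), ← hrdef, mul_inv]
    rw [← mul_assoc, mul_inv_cancel₀ hr0.ne', one_mul]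
  linarith

/-- **Proposition 3.2(i).** In the Gaussian sequence model with block structure
(`β̃_i ~ N(β*_i, 1/n)` independent; blocks given by the block assignment `blk`;
A1: the number `b` of blocks is constant; A2: `p_j − s_j → ∞`; A3: `s_j → ∞`),
if Assumption A4 holds (for every `j` and all sufficiently large `n`,
`√n τ_j ≥ √(2 ln(p_j − s_j))`), then `P(Ŝᵇ ⊆ S) → 1`, where
`Ŝᵇ = {i : |β̃_i| > τ_{blk i}}` and `S` is the support of `β*`. -/
theorem stmt4 (b : ℕ) (p : ℕ → ℕ)
    (blk : (n : ℕ) → Fin (p n) → Fin b)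
    (βs : (n : ℕ) → Fin (p n) → ℝ)
    (τ : ℕ → Fin b → ℝ) (hτ : ∀ n j, 0 < τ n j)
    (Ω : ℕ → Type) [∀ n, MeasurableSpace (Ω n)]
    (Pr : (n : ℕ) → Measure (Ω n)) [∀ n, IsProbabilityMeasure (Pr n)]
    (βt : (n : ℕ) → Fin (p n) → Ω n → ℝ)
    (hmeas : ∀ n i, Measurable (βt n i))
    (hindep : ∀ n, iIndepFun (βt n) (Pr n))
    (hlaw : ∀ n i, Measure.map (βt n i) (Pr n) =
      gaussianReal (βs n i) ((n : ℝ≥0))⁻¹)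
    (hA2 : ∀ j, Tendsto (fun n => inactJ (blk n) (βs n) j) atTop atTop)
    (hA3 : ∀ j, Tendsto (fun n => actJ (blk n) (βs n) j) atTop atTop)
    (hA4 : ∀ j, ∀ᶠ n : ℕ in atTop,
      Real.sqrt (2 * Real.log (inactJ (blk n) (βs n) j)) ≤ Real.sqrt n * τ n j) :
    Tendsto (fun n => (Pr n {ω | ∀ i : Fin (p n),
        τ n (blk n i) < |βt n i ω| → βs n i ≠ 0}).toReal) atTop (nhds 1) := by
  classical
  set m : ℕ → Fin b → ℕ := fun n j => inactJ (blk n) (βs n) j with hmdef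
  set ε : ℕ → ℝ := fun n => ∑ j : Fin b, (Real.sqrt (Real.log (m n j)))⁻¹ with hεdef
  have hε0 : ∀ n, 0 ≤ ε n := fun n => Finset.sum_nonneg fun j _ => by positivity
  set Ev : (n : ℕ) → Set (Ω n) := fun n => {ω | ∀ i : Fin (p n),
      τ n (blk n i) < |βt n i ω| → βs n i ≠ 0} with hEvdef
  have hEmeas : ∀ n, MeasurableSet (Ev n) := by
    intro n
    have hEq : Ev n = ⋂ i : Fin (p n),
        {ω : Ω n | τ n (blk n i) < |βt n i ω| → βs n i ≠ 0} := by
      ext ω; simp [hEvdef, Set.mem_iInter]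
    rw [hEq]
    refine MeasurableSet.iInter fun i => ?_
    by_cases h : βs n i = 0
    · have : {ω : Ω n | τ n (blk n i) < |βt n i ω| → βs n i ≠ 0}
          = {ω : Ω n | |βt n i ω| ≤ τ n (blk n i)} := by
        ext ω; simp [h, not_lt]
      rw [this]
      exact measurableSet_le (hmeas n i).abs measurable_const
    · have : {ω : Ω n | τ n (blk n i) < |βt n i ω| → βs n i ≠ 0} = Set.univ := by
        ext ω; simp [h]
      rw [this]; exact MeasurableSet.univ
  have hεt : Tendsto ε atTop (nhds 0) := by
    rw [hεdef]
    have h0 : (0 : ℝ) = ∑ _j : Fin b, (0 : ℝ) := by simp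
    rw [h0]
    apply tendsto_finset_sum
    intro j _
    apply Filter.Tendsto.inv_tendsto_atTop
    have hsqrt : Tendsto Real.sqrt atTop atTop := by
      have h1 : Real.sqrt = fun x : ℝ => x ^ ((1 : ℝ) / 2) := funext Real.sqrt_eq_rpow
      rw [h1]; exact tendsto_rpow_atTop (by norm_num)
    exact hsqrt.comp (Real.tendsto_log_atTop.comp
      (tendsto_natCast_atTop_atTop.comp (hA2 j)))
  have hev : ∀ᶠ n in atTop, 1 - ε n ≤ (Pr n (Ev n)).toReal := by
    have h1 : ∀ᶠ n : ℕ in atTop, 1 ≤ n := eventually_ge_atTop 1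
    have h2 : ∀ᶠ n : ℕ in atTop, ∀ j, 3 ≤ m n j :=
      eventually_all.2 fun j => (hA2 j).eventually_ge_atTop 3
    have h3 : ∀ᶠ n : ℕ in atTop, ∀ j,
        Real.sqrt (2 * Real.log (m n j)) ≤ Real.sqrt n * τ n j :=
      eventually_all.2 hA4
    filter_upwards [h1, h2, h3] with n hn hm3 hA4n
    -- variance is nonzero
    have hnn : ((n : ℝ≥0)) ≠ 0 := by
      simp only [ne_eq, Nat.cast_eq_zero]; omega
    have hv : ((n : ℝ≥0))⁻¹ ≠ 0 := inv_ne_zero hnn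
    set F : Finset (Fin (p n)) := Finset.univ.filter (fun i => βs n i = 0) with hFdef
    set g : Fin b → ℝ≥0∞ :=
      fun j => gaussianReal 0 ((n : ℝ≥0))⁻¹ {x : ℝ | τ n j < |x|} with hgdef
    -- complement bound
    have hcompl : (Ev n)ᶜ ⊆ ⋃ i ∈ F, {ω : Ω n | τ n (blk n i) < |βt n i ω|} := by
      intro ω hω
      simp only [hEvdef, Set.mem_compl_iff, Set.mem_setOf_eq] at hω
      push_neg at hω
      obtain ⟨i, hi1, hi2⟩ := hω
      exact Set.mem_biUnion (Finset.mem_filter.mpr ⟨Finset.mem_univ _, hi2⟩) hi1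
    have hone : ∀ i ∈ F, Pr n {ω : Ω n | τ n (blk n i) < |βt n i ω|} = g (blk n i) := by
      intro i hiF
      have h0 : βs n i = 0 := (Finset.mem_filter.mp hiF).2
      have hset : {ω : Ω n | τ n (blk n i) < |βt n i ω|}
          = βt n i ⁻¹' {x : ℝ | τ n (blk n i) < |x|} := rfl
      rw [hset, ← Measure.map_apply (hmeas n i)
        (measurableSet_lt measurable_const measurable_abs), hlaw, h0, hgdef]
    have hchain : Pr n ((Ev n)ᶜ) ≤ ∑ i ∈ F, g (blk n i) := by
      calc Pr n ((Ev n)ᶜ) ≤ Pr n (⋃ i ∈ F, {ω : Ω n | τ n (blk n i) < |βt n i ω|}) :=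
            measure_mono hcompl
        _ ≤ ∑ i ∈ F, Pr n {ω : Ω n | τ n (blk n i) < |βt n i ω|} :=
            measure_biUnion_finset_le _ _
        _ = ∑ i ∈ F, g (blk n i) := Finset.sum_congr rfl hone
    have hgroup : ∑ i ∈ F, g (blk n i)
        = ∑ j : Fin b, ((m n j : ℝ≥0∞) * g j) := by
      rw [← Finset.sum_fiberwise F (fun i => blk n i) (fun i => g (blk n i))]
      refine Finset.sum_congr rfl fun j _ => ?_
      have hcard : (F.filter (fun i => blk n i = j)).card = m n j := by
        rw [hFdef, Finset.filter_filter, hmdef]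
        simp only [inactJ]
        congr 1
        apply Finset.filter_congr
        intro i _
        tauto
      calc ∑ i ∈ F.filter (fun i => blk n i = j), g (blk n i)
          = ∑ i ∈ F.filter (fun i => blk n i = j), g j := by
            refine Finset.sum_congr rfl fun i hi => ?_
            rw [(Finset.mem_filter.mp hi).2]
        _ = (F.filter (fun i => blk n i = j)).card • g j := (Finset.sum_const _)
        _ = (m n j : ℝ≥0∞) * g j := by rw [hcard, nsmul_eq_mul]
    have hperj : ∀ j : Fin b, (m n j : ℝ≥0∞) * g j
        ≤ ENNReal.ofReal ((Real.sqrt (Real.log (m n j)))⁻¹) := by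
      intro j
      have htail := gauss_tail_le ((n : ℝ≥0))⁻¹ hv (hτ n j)
      have hco : ((((n : ℝ≥0))⁻¹ : ℝ≥0) : ℝ) = ((n : ℝ))⁻¹ := by
        push_cast; ring
      rw [hco] at htail
      have hA : 0 ≤ 2 * (Real.sqrt (2 * π * ((n : ℝ))⁻¹))⁻¹ * (((n : ℝ))⁻¹ / (τ n j)) *
          Real.exp (-(τ n j) ^ 2 / (2 * ((n : ℝ))⁻¹)) := by
        have := (hτ n j).le
        positivity
      calc (m n j : ℝ≥0∞) * g j
          ≤ (m n j : ℝ≥0∞) * ENNReal.ofReal (2 * (Real.sqrt (2 * π * ((n : ℝ))⁻¹))⁻¹ *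
              (((n : ℝ))⁻¹ / (τ n j)) * Real.exp (-(τ n j) ^ 2 / (2 * ((n : ℝ))⁻¹))) :=
            mul_le_mul_right htail _
        _ = ENNReal.ofReal ((m n j : ℝ) * (2 * (Real.sqrt (2 * π * ((n : ℝ))⁻¹))⁻¹ *
              (((n : ℝ))⁻¹ / (τ n j)) * Real.exp (-(τ n j) ^ 2 / (2 * ((n : ℝ))⁻¹)))) := by
            rw [← ENNReal.ofReal_natCast (m n j), ← ENNReal.ofReal_mul (by positivity)]
        _ ≤ ENNReal.ofReal ((Real.sqrt (Real.log (m n j)))⁻¹) :=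
            ENNReal.ofReal_le_ofReal
              (block_bound hn (hm3 j) (hτ n j) (hA4n j))
    have hfin : Pr n ((Ev n)ᶜ) ≤ ENNReal.ofReal (ε n) := by
      calc Pr n ((Ev n)ᶜ) ≤ ∑ i ∈ F, g (blk n i) := hchain
        _ = ∑ j : Fin b, ((m n j : ℝ≥0∞) * g j) := hgroup
        _ ≤ ∑ j : Fin b, ENNReal.ofReal ((Real.sqrt (Real.log (m n j)))⁻¹) :=
            Finset.sum_le_sum fun j _ => hperj j
        _ = ENNReal.ofReal (ε n) := by
            rw [hεdef, ENNReal.ofReal_sum_of_nonneg]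
            intro j _
            positivity
    have hcr : (Pr n ((Ev n)ᶜ)).toReal ≤ ε n :=
      ENNReal.toReal_le_of_le_ofReal (hε0 n) hfin
    have hadd := measure_add_measure_compl (μ := Pr n) (hEmeas n)
    rw [measure_univ] at hadd
    have hsum1 : (Pr n (Ev n)).toReal + (Pr n ((Ev n)ᶜ)).toReal = 1 := by
      rw [← ENNReal.toReal_add (measure_ne_top _ _) (measure_ne_top _ _), hadd]
      simp
    linarith
  have hub : ∀ n, (Pr n (Ev n)).toReal ≤ 1 := by
    intro n
    have := prob_le_one (μ := Pr n) (s := Ev n)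
    calc (Pr n (Ev n)).toReal ≤ (1 : ℝ≥0∞).toReal := ENNReal.toReal_mono (by simp) this
      _ = 1 := by simp
  have hlow : Tendsto (fun n => 1 - ε n) atTop (nhds 1) := by
    have := (tendsto_const_nhds (x := (1:ℝ)) (f := atTop)).sub hεt
    simpa using this
  exact tendsto_of_tendsto_of_tendsto_of_le_of_le' hlow tendsto_const_nhds hev
    (Filter.Eventually.of_forall hub)
end

section
/- In the Gaussian sequence model with block structure, assume A1, A2, A3, and Assumption A5: for every j and every sufficiently large n, √n (β*_{min,j} − τ_j) ≥ √(2 ln s_j). Then P(Ŝ^b ⊇ S) → 1 as n → ∞. (Proposition 3.2(iii): all active coordinates are retained asymptotically.) -/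
open MeasureTheory ProbabilityTheory Filter Finset
open scoped NNReal

lemma aux_sqrt_atTop : Tendsto Real.sqrt atTop atTop := by
  refine tendsto_atTop_atTop.2 fun c => ⟨(max c 0)^2, fun x hx => le_trans (le_max_left c 0) ?_⟩
  rw [← Real.sqrt_sq (le_max_right c 0)]
  exact Real.sqrt_le_sqrt hx

lemma aux_integral (v a : ℝ) (hv : 0 < v) (ha : 0 ≤ a) :
    IntegrableOn (fun x => x * Real.exp (-x^2/(2*v))) (Set.Ioi a) ∧
    ∫ x in Set.Ioi a, x * Real.exp (-x^2/(2*v)) = v * Real.exp (-a^2/(2*v)) := by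
  have hderiv : ∀ x ∈ Set.Ici a, HasDerivAt (fun x => -v * Real.exp (-x^2/(2*v)))
      (x * Real.exp (-x^2/(2*v))) x := by
    intro x _
    have h1 : HasDerivAt (fun x : ℝ => -x^2/(2*v)) (-(2*x^1)/(2*v)) x :=
      ((hasDerivAt_pow 2 x).neg.div_const (2*v))
    have h2 := (h1.exp.const_mul (-v))
    refine h2.congr_deriv ?_
    field_simp
  have hpos : ∀ x ∈ Set.Ioi a, 0 ≤ x * Real.exp (-x^2/(2*v)) := fun x hx =>
    mul_nonneg (le_trans ha (le_of_lt hx)) (Real.exp_nonneg _)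
  have hlim : Tendsto (fun x => -v * Real.exp (-x^2/(2*v))) atTop (nhds 0) := by
    have h3 : Tendsto (fun x : ℝ => -x^2/(2*v)) atTop atBot := by
      have : Tendsto (fun x : ℝ => x^2/(2*v)) atTop atTop :=
        (tendsto_pow_atTop (two_ne_zero)).atTop_div_const (by positivity)
      simpa [neg_div] using tendsto_neg_atBot_iff.2 this
    have := Real.tendsto_exp_atBot.comp h3
    simpa using this.const_mul (-v)
  refine ⟨integrableOn_Ioi_deriv_of_nonneg' hderiv hpos hlim, ?_⟩
  rw [integral_Ioi_of_hasDerivAt_of_nonneg' hderiv hpos hlim]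
  ring

lemma gaussian_tail (v : ℝ≥0) (hv : v ≠ 0) (a : ℝ) (ha : 0 < a) :
    gaussianReal 0 v {x | a ≤ |x|} ≤
      ENNReal.ofReal (2 * (Real.sqrt (2 * Real.pi * v))⁻¹ * ((v:ℝ) / a) *
        Real.exp (-a^2 / (2*(v:ℝ)))) := by
  have hv0 : (0:ℝ) < (v:ℝ) := by positivity
  set c : ℝ := (Real.sqrt (2 * Real.pi * v))⁻¹ with hc
  have hc0 : 0 ≤ c := by positivity
  have hpdf : ∀ x : ℝ, gaussianPDFReal 0 v x = c * Real.exp (-x^2/(2*(v:ℝ))) := by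
    intro x
    simp [gaussianPDFReal, hc]
  rw [gaussianReal_apply_eq_integral 0 hv]
  apply ENNReal.ofReal_le_ofReal
  have hset : {x : ℝ | a ≤ |x|} = Set.Iic (-a) ∪ Set.Ici a := by
    ext x
    simp [le_abs, le_neg, or_comm]
  rw [hset, setIntegral_union (Set.Iic_disjoint_Ici.2 (not_le.2 (by linarith))) measurableSet_Ici
    ((integrable_gaussianPDFReal 0 v).integrableOn) ((integrable_gaussianPDFReal 0 v).integrableOn)]
  have hsym : ∫ x in Set.Iic (-a), gaussianPDFReal 0 v x
      = ∫ x in Set.Ici a, gaussianPDFReal 0 v x := by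
    have h1 : ∫ x in Set.Iic (-a), gaussianPDFReal 0 v (-x)
        = ∫ x in Set.Ici a, gaussianPDFReal 0 v x := by
      rw [MeasureTheory.integral_Ici_eq_integral_Ioi]
      simpa using integral_comp_neg_Iic (-a) (gaussianPDFReal 0 v)
    rw [← h1]
    congr 1
    ext x
    simp [hpdf, neg_sq]
  rw [hsym, ← two_mul]
  have hIoi := aux_integral (v:ℝ) a hv0 ha.le
  have hbound : ∫ x in Set.Ici a, gaussianPDFReal 0 v x
      ≤ ∫ x in Set.Ici a, (c/a) * (x * Real.exp (-x^2/(2*(v:ℝ)))) := by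
    apply setIntegral_mono_on ((integrable_gaussianPDFReal 0 v).integrableOn)
    · exact ((integrableOn_Ici_iff_integrableOn_Ioi (by finiteness)).2 (hIoi.1.const_mul (c/a)))
    · exact measurableSet_Ici
    · intro x hx
      rw [hpdf]
      have hE : 0 < Real.exp (-x^2/(2*(v:ℝ))) := Real.exp_pos _
      have hax : a ≤ x := hx
      rw [div_mul_eq_mul_div, le_div_iff₀ ha]
      nlinarith [mul_nonneg hc0 hE.le]
  have hval : ∫ x in Set.Ici a, (c/a) * (x * Real.exp (-x^2/(2*(v:ℝ))))
      = (c/a) * ((v:ℝ) * Real.exp (-a^2/(2*(v:ℝ)))) := by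
    rw [MeasureTheory.integral_Ici_eq_integral_Ioi, MeasureTheory.integral_const_mul, hIoi.2]
  calc 2 * ∫ x in Set.Ici a, gaussianPDFReal 0 v x
      ≤ 2 * ((c/a) * ((v:ℝ) * Real.exp (-a^2/(2*(v:ℝ))))) := by
        rw [← hval]; exact mul_le_mul_of_nonneg_left hbound (by norm_num)
    _ = 2 * c * ((v:ℝ) / a) * Real.exp (-a^2 / (2*(v:ℝ))) := by ring

lemma aux_mono (n t a : ℝ) (hn : 1 ≤ n) (ht : 0 < t) (ha : t / Real.sqrt n ≤ a) :
    2 * (Real.sqrt (2 * Real.pi * n⁻¹))⁻¹ * (n⁻¹ / a) * Real.exp (-a^2 / (2*n⁻¹)) ≤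
      2 / (Real.sqrt (2*Real.pi) * t) * Real.exp (-t^2/2) := by
  have hn0 : (0:ℝ) < n := by linarith
  have hsn : 0 < Real.sqrt n := Real.sqrt_pos.2 hn0
  have ha0 : 0 < a := lt_of_lt_of_le (div_pos ht hsn) ha
  have hss : Real.sqrt n * Real.sqrt n = n := Real.mul_self_sqrt hn0.le
  have hp : 0 < Real.sqrt (2*Real.pi) := Real.sqrt_pos.2 (by positivity)
  have hta : t ≤ a * Real.sqrt n := by
    rw [div_le_iff₀ hsn] at ha; linarith
  have h1 : (Real.sqrt (2*Real.pi*n⁻¹))⁻¹ = Real.sqrt n / Real.sqrt (2*Real.pi) := by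
    rw [Real.sqrt_mul (by positivity), Real.sqrt_inv]
    field_simp
  rw [h1]
  have hE : Real.exp (-a^2/(2*n⁻¹)) ≤ Real.exp (-t^2/2) := by
    apply Real.exp_le_exp.2
    have h2 : -a^2/(2*n⁻¹) = -(a^2*n)/2 := by field_simp
    rw [h2]
    have h3 : t^2 ≤ a^2 * n := by nlinarith
    linarith
  have hF : 2 * (Real.sqrt n / Real.sqrt (2*Real.pi)) * (n⁻¹ / a)
      ≤ 2 / (Real.sqrt (2*Real.pi) * t) := by
    have h4 : 2 * (Real.sqrt n / Real.sqrt (2*Real.pi)) * (n⁻¹/a) =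
        2 * Real.sqrt n / (Real.sqrt (2*Real.pi) * (n * a)) := by
      field_simp
    rw [h4, div_le_div_iff₀ (by positivity) (by positivity)]
    have hna : Real.sqrt n * t ≤ n * a := by nlinarith
    nlinarith [mul_pos hp (mul_pos hn0 ha0)]
  calc 2 * (Real.sqrt n / Real.sqrt (2*Real.pi)) * (n⁻¹ / a) * Real.exp (-a^2 / (2*n⁻¹))
      ≤ 2 / (Real.sqrt (2*Real.pi) * t) * Real.exp (-t^2/2) :=
        mul_le_mul hF hE (Real.exp_nonneg _) (by positivity)

/-- **Proposition 3.2(iii).** In the Gaussian sequence model with block structure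
(assumptions A1, A2, A3), if Assumption A5 holds (for every `j` and all sufficiently
large `n`, `√n (β*_{min,j} − τ_j) ≥ √(2 ln s_j)`, stated equivalently for every active
coordinate `i` of block `j`), then `P(Ŝᵇ ⊇ S) → 1` as `n → ∞`. -/
theorem stmt6 (b : ℕ) (p : ℕ → ℕ)
    (blk : (n : ℕ) → Fin (p n) → Fin b)
    (βs : (n : ℕ) → Fin (p n) → ℝ)
    (τ : ℕ → Fin b → ℝ) (hτ : ∀ n j, 0 < τ n j)
    (Ω : ℕ → Type) [∀ n, MeasurableSpace (Ω n)]
    (Pr : (n : ℕ) → Measure (Ω n)) [∀ n, IsProbabilityMeasure (Pr n)]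
    (βt : (n : ℕ) → Fin (p n) → Ω n → ℝ)
    (hmeas : ∀ n i, Measurable (βt n i))
    (hindep : ∀ n, iIndepFun (βt n) (Pr n))
    (hlaw : ∀ n i, Measure.map (βt n i) (Pr n) =
      gaussianReal (βs n i) ((n : ℝ≥0))⁻¹)
    (hA2 : ∀ j, Tendsto (fun n => inactJ (blk n) (βs n) j) atTop atTop)
    (hA3 : ∀ j, Tendsto (fun n => actJ (blk n) (βs n) j) atTop atTop)
    (hA5 : ∀ j, ∀ᶠ n : ℕ in atTop, ∀ i : Fin (p n), blk n i = j → βs n i ≠ 0 →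
      Real.sqrt (2 * Real.log (actJ (blk n) (βs n) j)) ≤
        Real.sqrt n * (|βs n i| - τ n j)) :
    Tendsto (fun n => (Pr n {ω | ∀ i : Fin (p n),
        βs n i ≠ 0 → τ n (blk n i) < |βt n i ω|}).toReal) atTop (nhds 1) := by
  classical
  set A : (n : ℕ) → Set (Ω n) := fun n =>
    {ω | ∀ i : Fin (p n), βs n i ≠ 0 → τ n (blk n i) < |βt n i ω|} with hA
  have hAmeas : ∀ n, MeasurableSet (A n) := by
    intro n
    have h : A n = ⋂ i, {ω | βs n i ≠ 0 → τ n (blk n i) < |βt n i ω|} := by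
      ext ω; simp [hA, Set.mem_iInter]
    rw [h]
    refine MeasurableSet.iInter fun i => ?_
    by_cases hb : βs n i = 0
    · simp [hb]
    · have h2 : {ω | βs n i ≠ 0 → τ n (blk n i) < |βt n i ω|}
          = {ω | τ n (blk n i) < |βt n i ω|} := by ext ω; simp [hb]
      rw [h2]
      exact measurableSet_lt measurable_const (hmeas n i).abs
  -- the bounding sequence
  have hH0 : Tendsto (fun n => ∑ j : Fin b,
      2 / (Real.sqrt (2*Real.pi) * Real.sqrt (2 * Real.log (actJ (blk n) (βs n) j))))
      atTop (nhds 0) := by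
    have h0 : Tendsto (fun n => ∑ j : Fin b,
        2 / (Real.sqrt (2*Real.pi) * Real.sqrt (2 * Real.log (actJ (blk n) (βs n) j))))
        atTop (nhds (∑ _j : Fin b, (0:ℝ))) := by
      apply tendsto_finset_sum
      intro j _
      have h1 : Tendsto (fun n => Real.sqrt (2*Real.pi) *
          Real.sqrt (2 * Real.log (actJ (blk n) (βs n) j))) atTop atTop := by
        apply Tendsto.const_mul_atTop (Real.sqrt_pos.2 (by positivity))
        have h2 : Tendsto (fun n => ((actJ (blk n) (βs n) j : ℝ))) atTop atTop :=
          tendsto_natCast_atTop_atTop.comp (hA3 j)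
        have h3 : Tendsto (fun n => 2 * Real.log (actJ (blk n) (βs n) j)) atTop atTop :=
          Tendsto.const_mul_atTop (by norm_num : (0:ℝ) < 2) (Real.tendsto_log_atTop.comp h2)
        exact aux_sqrt_atTop.comp h3
      have h5 := h1.inv_tendsto_atTop
      have h6 := h5.const_mul (2:ℝ)
      rw [mul_zero] at h6
      simpa [div_eq_mul_inv, Function.comp] using h6
    simpa using h0
  -- the main eventual bound
  have hev : ∀ᶠ n : ℕ in atTop, (Pr n ((A n)ᶜ)).toReal ≤ ∑ j : Fin b,
      2 / (Real.sqrt (2*Real.pi) * Real.sqrt (2 * Real.log (actJ (blk n) (βs n) j))) := by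
    have e1 : ∀ᶠ n : ℕ in atTop, 1 ≤ n := eventually_ge_atTop 1
    have e2 : ∀ᶠ n : ℕ in atTop, ∀ j : Fin b, 2 ≤ actJ (blk n) (βs n) j :=
      eventually_all.2 fun j => (hA3 j).eventually_ge_atTop 2
    have e3 : ∀ᶠ n : ℕ in atTop, ∀ j : Fin b, ∀ i : Fin (p n), blk n i = j → βs n i ≠ 0 →
        Real.sqrt (2 * Real.log (actJ (blk n) (βs n) j)) ≤
          Real.sqrt n * (|βs n i| - τ n j) := eventually_all.2 hA5
    filter_upwards [e1, e2, e3] with n hn1 hs2 h5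
    set s : Fin b → ℕ := actJ (blk n) (βs n) with hsdef
    have hs1 : ∀ j, (1:ℝ) < (s j : ℝ) := fun j => by exact_mod_cast lt_of_lt_of_le one_lt_two (hs2 j)
    have htpos : ∀ j, 0 < Real.sqrt (2 * Real.log (s j)) := fun j =>
      Real.sqrt_pos.2 (by have := Real.log_pos (hs1 j); linarith)
    set F : Fin b → ℝ := fun j => 2 / (Real.sqrt (2*Real.pi) * Real.sqrt (2 * Real.log (s j)))
      * ((s j : ℝ))⁻¹ with hFdef
    have hFnn : ∀ j, 0 ≤ F j := fun j => by
      rw [hFdef]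
      have := (htpos j).le
      positivity
    set D : Fin (p n) → ℝ := fun i => if βs n i ≠ 0 then F (blk n i) else 0 with hDdef
    have hDnn : ∀ i, 0 ≤ D i := fun i => by
      rw [hDdef]; dsimp only; split
      · exact hFnn _
      · exact le_refl 0
    have hsn : (0:ℝ) < Real.sqrt n := Real.sqrt_pos.2 (by exact_mod_cast hn1)
    have hv : ((n:ℝ≥0))⁻¹ ≠ 0 := by
      simp only [ne_eq, inv_eq_zero, Nat.cast_eq_zero]
      omega
    -- per-coordinate bound
    have key : ∀ i : Fin (p n),
        Pr n {ω | βs n i ≠ 0 ∧ |βt n i ω| ≤ τ n (blk n i)} ≤ ENNReal.ofReal (D i) := by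
      intro i
      by_cases hb : βs n i = 0
      · have hempty : {ω | βs n i ≠ 0 ∧ |βt n i ω| ≤ τ n (blk n i)} = (∅ : Set (Ω n)) := by
          ext ω; simp [hb]
        rw [hempty]
        simp
      · have hj := h5 (blk n i) i rfl hb
        set a : ℝ := |βs n i| - τ n (blk n i) with hadef
        have hta : Real.sqrt (2 * Real.log (s (blk n i))) / Real.sqrt n ≤ a :=
          (div_le_iff₀ hsn).2 (le_trans hj (le_of_eq (mul_comm _ _)))
        have ha0 : 0 < a := lt_of_lt_of_le (div_pos (htpos _) hsn) hta
        have hmset : MeasurableSet {x : ℝ | a ≤ |x - βs n i|} :=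
          measurableSet_le measurable_const ((measurable_id.sub_const (βs n i)).abs)
        have step1 : {ω | βs n i ≠ 0 ∧ |βt n i ω| ≤ τ n (blk n i)}
            ⊆ (βt n i) ⁻¹' {x | a ≤ |x - βs n i|} := by
          intro ω hω
          have h1 : |βs n i| - |βt n i ω| ≤ |βs n i - βt n i ω| := abs_sub_abs_le_abs_sub _ _
          have h2 : a ≤ |βt n i ω - βs n i| := by
            rw [abs_sub_comm]
            have := hω.2
            rw [hadef]; linarith
          exact h2
        have hco : ((((n:ℝ≥0))⁻¹ : ℝ≥0) : ℝ) = ((n:ℝ))⁻¹ := by push_cast; ring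
        calc Pr n {ω | βs n i ≠ 0 ∧ |βt n i ω| ≤ τ n (blk n i)}
            ≤ Pr n ((βt n i) ⁻¹' {x | a ≤ |x - βs n i|}) := measure_mono step1
          _ = (Measure.map (βt n i) (Pr n)) {x | a ≤ |x - βs n i|} :=
              (Measure.map_apply (hmeas n i) hmset).symm
          _ = gaussianReal (βs n i) ((n:ℝ≥0))⁻¹ {x | a ≤ |x - βs n i|} := by rw [hlaw]
          _ = gaussianReal 0 ((n:ℝ≥0))⁻¹ {x | a ≤ |x|} := by
              have hmap := gaussianReal_map_add_const (μ := 0) (v := ((n:ℝ≥0))⁻¹) (βs n i)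
              rw [zero_add] at hmap
              rw [← hmap, Measure.map_apply (measurable_add_const (βs n i)) hmset]
              congr 1
              ext x
              simp
          _ ≤ ENNReal.ofReal (2 * (Real.sqrt (2 * Real.pi * ((((n:ℝ≥0))⁻¹ : ℝ≥0) : ℝ)))⁻¹ *
                (((((n:ℝ≥0))⁻¹ : ℝ≥0) : ℝ) / a) *
                Real.exp (-a^2 / (2 * ((((n:ℝ≥0))⁻¹ : ℝ≥0) : ℝ)))) :=
              gaussian_tail ((n:ℝ≥0))⁻¹ hv a ha0
          _ ≤ ENNReal.ofReal (2 / (Real.sqrt (2*Real.pi) * Real.sqrt (2 * Real.log (s (blk n i))))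
                * Real.exp (-(Real.sqrt (2 * Real.log (s (blk n i))))^2/2)) := by
              apply ENNReal.ofReal_le_ofReal
              rw [hco]
              exact aux_mono (n:ℝ) (Real.sqrt (2 * Real.log (s (blk n i)))) a
                (by exact_mod_cast hn1) (htpos _) hta
          _ = ENNReal.ofReal (D i) := by
              congr 1
              have hs0 : (0:ℝ) < (s (blk n i) : ℝ) := lt_trans one_pos (hs1 _)
              have hlog : 0 ≤ 2 * Real.log (s (blk n i)) := by
                have := Real.log_pos (hs1 (blk n i)); linarith
              have hsq : (Real.sqrt (2 * Real.log (s (blk n i))))^2 = 2 * Real.log (s (blk n i)) :=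
                Real.sq_sqrt hlog
              rw [hDdef]
              simp only [hb, ne_eq, not_false_eq_true, if_true]
              rw [hFdef]
              dsimp only
              rw [hsq]
              have hexp : Real.exp (-(2 * Real.log (s (blk n i)))/2) = ((s (blk n i) : ℝ))⁻¹ := by
                rw [show -(2 * Real.log ((s (blk n i) : ℝ)))/2 = -Real.log ((s (blk n i)):ℝ) by ring,
                  Real.exp_neg, Real.exp_log hs0]
              rw [hexp]
    -- union bound
    have hunion : Pr n ((A n)ᶜ) ≤ ENNReal.ofReal (∑ i : Fin (p n), D i) := by
      have hsub : (A n)ᶜ ⊆ ⋃ i, {ω | βs n i ≠ 0 ∧ |βt n i ω| ≤ τ n (blk n i)} := by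
        intro ω hω
        simp only [hA, Set.mem_compl_iff, Set.mem_setOf_eq, not_forall] at hω
        obtain ⟨i, hi, hlt⟩ := hω
        exact Set.mem_iUnion.2 ⟨i, hi, not_lt.1 hlt⟩
      calc Pr n ((A n)ᶜ)
          ≤ Pr n (⋃ i, {ω | βs n i ≠ 0 ∧ |βt n i ω| ≤ τ n (blk n i)}) := measure_mono hsub
        _ ≤ ∑' i, Pr n {ω | βs n i ≠ 0 ∧ |βt n i ω| ≤ τ n (blk n i)} := measure_iUnion_le _
        _ = ∑ i, Pr n {ω | βs n i ≠ 0 ∧ |βt n i ω| ≤ τ n (blk n i)} := tsum_fintype _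
        _ ≤ ∑ i, ENNReal.ofReal (D i) := Finset.sum_le_sum fun i _ => key i
        _ = ENNReal.ofReal (∑ i, D i) := (ENNReal.ofReal_sum_of_nonneg fun i _ => hDnn i).symm
    have hGle : (Pr n ((A n)ᶜ)).toReal ≤ ∑ i : Fin (p n), D i :=
      ENNReal.toReal_le_of_le_ofReal (Finset.sum_nonneg fun i _ => hDnn i) hunion
    -- regroup by blocks
    have hsum : ∑ i : Fin (p n), D i = ∑ j : Fin b, (s j : ℝ) * F j := by
      have h7 : ∑ i : Fin (p n), D i
          = ∑ i ∈ Finset.univ.filter (fun i => βs n i ≠ 0), F (blk n i) := by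
        rw [Finset.sum_filter]
      rw [h7, ← Finset.sum_fiberwise_of_maps_to (g := blk n)
        (fun i _ => Finset.mem_univ (blk n i)) (fun i => F (blk n i))]
      apply Finset.sum_congr rfl
      intro j _
      have h8 : ∀ i ∈ (Finset.univ.filter (fun i => βs n i ≠ 0)).filter (fun i => blk n i = j),
          F (blk n i) = F j := fun i hi => by rw [(Finset.mem_filter.1 hi).2]
      rw [Finset.sum_congr rfl h8, Finset.sum_const, nsmul_eq_mul]
      congr 2
      rw [Finset.filter_filter, hsdef]
      unfold actJ
      exact congrArg Finset.card (Finset.filter_congr fun i _ => by tauto)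
    have hcollapse : ∀ j : Fin b, (s j : ℝ) * F j
        = 2 / (Real.sqrt (2*Real.pi) * Real.sqrt (2 * Real.log (s j))) := by
      intro j
      have hs0 : ((s j : ℝ)) ≠ 0 := ne_of_gt (lt_trans one_pos (hs1 j))
      rw [hFdef]
      dsimp only
      rw [mul_comm ((2:ℝ) / _) _, ← mul_assoc, mul_inv_cancel₀ hs0, one_mul]
    calc (Pr n ((A n)ᶜ)).toReal
        ≤ ∑ i : Fin (p n), D i := hGle
      _ = ∑ j : Fin b, (s j : ℝ) * F j := hsum
      _ = ∑ j : Fin b, 2 / (Real.sqrt (2*Real.pi) * Real.sqrt (2 * Real.log (s j))) :=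
          Finset.sum_congr rfl fun j _ => hcollapse j
  -- squeeze
  have hG0 : Tendsto (fun n => (Pr n ((A n)ᶜ)).toReal) atTop (nhds 0) :=
    squeeze_zero' (Eventually.of_forall fun n => ENNReal.toReal_nonneg) hev hH0
  have hmain : ∀ n, (Pr n (A n)).toReal = 1 - (Pr n ((A n)ᶜ)).toReal := by
    intro n
    rw [prob_compl_eq_one_sub (hAmeas n),
      ENNReal.toReal_sub_of_le prob_le_one ENNReal.one_ne_top, ENNReal.toReal_one]
    ring
  have hfin : Tendsto (fun n => 1 - (Pr n ((A n)ᶜ)).toReal) atTop (nhds (1 - 0)) :=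
    tendsto_const_nhds.sub hG0
  rw [sub_zero] at hfin
  exact hfin.congr fun n => (hmain n).symm
end

section
/- In the Gaussian sequence model with block structure, assume Assumption A4 (for every j and every sufficiently large n, √n τ_j ≥ √(2 ln(p_j − s_j))), Assumption A5 (for every j and every sufficiently large n, √n (β*_{min,j} − τ_j) ≥ √(2 ln s_j)), and that p_j − s_j > 1 and s_j > 1 for every j. Then for every sufficiently large n: P(Ŝ^b ≠ S) ≤ Σ_{j=1}^b [ e^{−(n/2)(τ_j² − 2 ln(p_j−s_j)/n)} / √(π ln(p_j−s_j)) + e^{−(n/2)((β*_{min,j} − τ_j)² − 2 ln(s_j)/n)} / √(π ln s_j) ]. (Theorem 3.4, first part: non-asymptotic bound on the probability of incorrect model recovery.) -/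
open MeasureTheory ProbabilityTheory Filter Finset
open scoped NNReal

section AuxTail
open Real Set

lemma tail_int_upper {c μ t : ℝ} (hc : 0 < c) :
    ∫ x in Set.Ioi (μ + t), (x - μ) * Real.exp (-c * (x - μ)^2)
      = Real.exp (-c * t^2) / (2*c) := by
  have hderiv : ∀ x ∈ Set.Ici (μ + t),
      HasDerivAt (fun x => -(Real.exp (-c * (x - μ)^2) / (2*c)))
        ((x - μ) * Real.exp (-c * (x - μ)^2)) x := by
    intro x _
    have h1 : HasDerivAt (fun x : ℝ => -c * (x - μ)^2) (-c * (2 * (x - μ))) x := by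
      simpa using (((hasDerivAt_id x).sub_const μ).pow 2).const_mul (-c)
    have h2 := ((h1.exp.div_const (2*c)).neg)
    refine h2.congr_deriv (Eq.symm ?_)
    rw [← neg_div, eq_div_iff (by positivity : (2*c:ℝ) ≠ 0)]
    ring
  have hint : IntegrableOn (fun x => (x - μ) * Real.exp (-c * (x - μ)^2))
      (Set.Ioi (μ + t)) := by
    have := (integrable_mul_exp_neg_mul_sq hc).comp_sub_right μ
    exact this.integrableOn
  have htend : Tendsto (fun x => -(Real.exp (-c * (x - μ)^2) / (2*c))) atTop (nhds 0) := by
    have h2 : Tendsto (fun x : ℝ => (x - μ)^2) atTop atTop := by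
      have : Tendsto (fun x : ℝ => x - μ) atTop atTop :=
        tendsto_atTop_add_const_right _ (-μ) tendsto_id
      exact (tendsto_pow_atTop two_ne_zero).comp this
    have h3 : Tendsto (fun x : ℝ => -c * (x - μ)^2) atTop atBot :=
      h2.const_mul_atTop_of_neg (neg_lt_zero.mpr hc)
    have h4 := (Real.tendsto_exp_atBot.comp h3).div_const (2*c)
    have h5 := h4.neg
    simpa using h5
  have key := integral_Ioi_of_hasDerivAt_of_tendsto' hderiv hint htend
  rw [key]
  have : (μ + t - μ) = t := by ring
  rw [this]
  ring

lemma tail_int_lower {c μ t : ℝ} (hc : 0 < c) :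
    ∫ x in Set.Iic (μ - t), (μ - x) * Real.exp (-c * (x - μ)^2)
      = Real.exp (-c * t^2) / (2*c) := by
  have hderiv : ∀ x ∈ Set.Iic (μ - t),
      HasDerivAt (fun x => Real.exp (-c * (x - μ)^2) / (2*c))
        ((μ - x) * Real.exp (-c * (x - μ)^2)) x := by
    intro x _
    have h1 : HasDerivAt (fun x : ℝ => -c * (x - μ)^2) (-c * (2 * (x - μ))) x := by
      simpa using (((hasDerivAt_id x).sub_const μ).pow 2).const_mul (-c)
    have h2 := h1.exp.div_const (2*c)
    refine h2.congr_deriv (Eq.symm ?_)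
    rw [eq_div_iff (by positivity : (2*c:ℝ) ≠ 0)]
    ring
  have hint : IntegrableOn (fun x => (μ - x) * Real.exp (-c * (x - μ)^2))
      (Set.Iic (μ - t)) := by
    have h := ((integrable_mul_exp_neg_mul_sq hc).comp_sub_right μ).neg
    have h2 : (fun x : ℝ => (μ - x) * Real.exp (-c * (x - μ)^2))
        = -(fun x : ℝ => (x - μ) * Real.exp (-c * (x - μ)^2)) := by
      funext x; simp; ring
    rw [h2]
    exact h.integrableOn
  have htend : Tendsto (fun x => Real.exp (-c * (x - μ)^2) / (2*c)) atBot (nhds 0) := by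
    have h2 : Tendsto (fun x : ℝ => (x - μ)^2) atBot atTop := by
      have h0 : Tendsto (fun x : ℝ => x - μ) atBot atBot :=
        tendsto_atBot_add_const_right _ (-μ) tendsto_id
      have hneg : Tendsto (fun x : ℝ => -(x - μ)) atBot atTop :=
        tendsto_neg_atBot_atTop.comp h0
      have hsq : Tendsto (fun y : ℝ => y^2) atTop atTop := tendsto_pow_atTop two_ne_zero
      have h5 : Tendsto (fun x : ℝ => (-(x - μ))^2) atBot atTop := hsq.comp hneg
      have h6 : (fun x : ℝ => (x - μ)^2) = fun x : ℝ => (-(x - μ))^2 := by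
        funext x; ring
      rw [h6]
      exact h5
    have h3 : Tendsto (fun x : ℝ => -c * (x - μ)^2) atBot atBot :=
      h2.const_mul_atTop_of_neg (neg_lt_zero.mpr hc)
    have h4 := (Real.tendsto_exp_atBot.comp h3).div_const (2*c)
    simpa using h4
  have key := integral_Iic_of_hasDerivAt_of_tendsto' hderiv hint htend
  rw [key]
  have : (μ - t - μ)^2 = t^2 := by ring
  rw [this]
  ring

lemma gauss_tail_s9 {μ : ℝ} {v : ℝ≥0} (hv : v ≠ 0) {t : ℝ} (ht : 0 < t) :
    gaussianReal μ v {x | t ≤ |x - μ|} ≤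
      ENNReal.ofReal (2 * ((Real.sqrt (2*π*(v:ℝ)))⁻¹ *
        ((v:ℝ) * Real.exp (-t^2/(2*(v:ℝ))) / t))) := by
  have hvpos : (0:ℝ) < (v:ℝ) := by
    exact_mod_cast zero_lt_iff.mpr hv
  set c : ℝ := (2*(v:ℝ))⁻¹ with hcdef
  have hc : 0 < c := by positivity
  set K : ℝ := (Real.sqrt (2*π*(v:ℝ)))⁻¹ with hKdef
  have hK : 0 < K := by
    have : 0 < Real.sqrt (2*π*(v:ℝ)) := Real.sqrt_pos.mpr (by positivity)
    positivity
  have hpdf : ∀ x, gaussianPDFReal μ v x = K * Real.exp (-c*(x-μ)^2) := by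
    intro x
    rw [gaussianPDFReal]
    congr 1
    rw [hcdef, div_eq_mul_inv]
    ring
  have hval : Real.exp (-c*t^2)/(2*c) = (v:ℝ) * Real.exp (-t^2/(2*(v:ℝ))) := by
    have h2c : 2*c = (v:ℝ)⁻¹ := by
      rw [hcdef]; field_simp
    have harg : -c*t^2 = -t^2/(2*(v:ℝ)) := by
      rw [hcdef, div_eq_mul_inv]; ring
    rw [harg, h2c, div_eq_mul_inv, inv_inv]
    ring
  set M : ℝ := K * ((v:ℝ) * Real.exp (-t^2/(2*(v:ℝ))) / t) with hMdef
  have hM : 0 ≤ M := by positivity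
  -- inclusion
  have hsub : {x : ℝ | t ≤ |x - μ|} ⊆ Set.Iic (μ - t) ∪ Set.Ici (μ + t) := by
    intro x hx
    simp only [Set.mem_setOf_eq] at hx
    rcases le_abs.mp hx with h | h
    · right; simp only [Set.mem_Ici]; linarith
    · left; simp only [Set.mem_Iic]; linarith
  -- upper tail
  have hupper : gaussianReal μ v (Set.Ici (μ + t)) ≤ ENNReal.ofReal M := by
    rw [gaussianReal_apply_eq_integral μ hv]
    apply ENNReal.ofReal_le_ofReal
    rw [integral_Ici_eq_integral_Ioi]
    have hmono : ∫ x in Set.Ioi (μ + t), gaussianPDFReal μ v x ≤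
        ∫ x in Set.Ioi (μ + t), K/t * ((x - μ) * Real.exp (-c*(x-μ)^2)) := by
      apply setIntegral_mono_on
      · exact (integrable_gaussianPDFReal μ v).integrableOn
      · exact (((integrable_mul_exp_neg_mul_sq hc).comp_sub_right μ).integrableOn).const_mul _
      · exact measurableSet_Ioi
      · intro x hx
        rw [hpdf x]
        have hy : t ≤ x - μ := by
          simp only [Set.mem_Ioi] at hx; linarith
        have h1 : 1 ≤ (x - μ)/t := (one_le_div ht).mpr hy
        calc K * Real.exp (-c*(x-μ)^2) = K * Real.exp (-c*(x-μ)^2) * 1 := by ring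
          _ ≤ K * Real.exp (-c*(x-μ)^2) * ((x - μ)/t) := by
              apply mul_le_mul_of_nonneg_left h1 (by positivity)
          _ = K/t * ((x - μ) * Real.exp (-c*(x-μ)^2)) := by ring
    calc ∫ x in Set.Ioi (μ + t), gaussianPDFReal μ v x
        ≤ ∫ x in Set.Ioi (μ + t), K/t * ((x - μ) * Real.exp (-c*(x-μ)^2)) := hmono
      _ = K/t * ∫ x in Set.Ioi (μ + t), (x - μ) * Real.exp (-c*(x-μ)^2) :=
          integral_const_mul _ _
      _ = K/t * (Real.exp (-c*t^2)/(2*c)) := by rw [tail_int_upper hc]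
      _ = M := by rw [hval, hMdef]; ring
  -- lower tail
  have hlower : gaussianReal μ v (Set.Iic (μ - t)) ≤ ENNReal.ofReal M := by
    rw [gaussianReal_apply_eq_integral μ hv]
    apply ENNReal.ofReal_le_ofReal
    have hmono : ∫ x in Set.Iic (μ - t), gaussianPDFReal μ v x ≤
        ∫ x in Set.Iic (μ - t), K/t * ((μ - x) * Real.exp (-c*(x-μ)^2)) := by
      apply setIntegral_mono_on
      · exact (integrable_gaussianPDFReal μ v).integrableOn
      · have h := ((integrable_mul_exp_neg_mul_sq hc).comp_sub_right μ).neg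
        have h2 : (fun x : ℝ => (μ - x) * Real.exp (-c * (x - μ)^2))
            = -(fun x : ℝ => (x - μ) * Real.exp (-c * (x - μ)^2)) := by
          funext x; simp; ring
        have hI : IntegrableOn (fun x : ℝ => (μ - x) * Real.exp (-c*(x-μ)^2))
            (Set.Iic (μ - t)) := by
          rw [h2]; exact h.integrableOn
        exact hI.const_mul _
      · exact measurableSet_Iic
      · intro x hx
        rw [hpdf x]
        have hy : t ≤ μ - x := by
          simp only [Set.mem_Iic] at hx; linarith
        have h1 : 1 ≤ (μ - x)/t := (one_le_div ht).mpr hy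
        calc K * Real.exp (-c*(x-μ)^2) = K * Real.exp (-c*(x-μ)^2) * 1 := by ring
          _ ≤ K * Real.exp (-c*(x-μ)^2) * ((μ - x)/t) := by
              apply mul_le_mul_of_nonneg_left h1 (by positivity)
          _ = K/t * ((μ - x) * Real.exp (-c*(x-μ)^2)) := by ring
    calc ∫ x in Set.Iic (μ - t), gaussianPDFReal μ v x
        ≤ ∫ x in Set.Iic (μ - t), K/t * ((μ - x) * Real.exp (-c*(x-μ)^2)) := hmono
      _ = K/t * ∫ x in Set.Iic (μ - t), (μ - x) * Real.exp (-c*(x-μ)^2) :=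
          integral_const_mul _ _
      _ = K/t * (Real.exp (-c*t^2)/(2*c)) := by rw [tail_int_lower hc]
      _ = M := by rw [hval, hMdef]; ring
  calc gaussianReal μ v {x | t ≤ |x - μ|}
      ≤ gaussianReal μ v (Set.Iic (μ - t) ∪ Set.Ici (μ + t)) := measure_mono hsub
    _ ≤ gaussianReal μ v (Set.Iic (μ - t)) + gaussianReal μ v (Set.Ici (μ + t)) :=
        measure_union_le _ _
    _ ≤ ENNReal.ofReal M + ENNReal.ofReal M := add_le_add hlower hupper
    _ = ENNReal.ofReal (2 * M) := by
        rw [← ENNReal.ofReal_add hM hM]; ring_nf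

lemma real_step {N τ L : ℝ} (hN : 0 < N) (hτ : 0 < τ) (hL : 0 < L)
    (hA : Real.sqrt (2*L) ≤ Real.sqrt N * τ) :
    2 * ((Real.sqrt (2*π*N⁻¹))⁻¹ * (N⁻¹ * Real.exp (-τ^2/(2*N⁻¹)) / τ))
      ≤ Real.exp (-N * τ^2/2) / Real.sqrt (π*L) := by
  have hπ := Real.pi_pos
  have hexp : -τ^2/(2*N⁻¹) = -N*τ^2/2 := by
    field_simp
  have hsN : Real.sqrt (2*π*N⁻¹) = Real.sqrt (2*π) / Real.sqrt N := by
    rw [Real.sqrt_mul (by positivity), Real.sqrt_inv, div_eq_mul_inv]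
  rw [hexp, hsN]
  set E := Real.exp (-N*τ^2/2) with hEdef
  have hE : 0 < E := Real.exp_pos _
  set S2 := Real.sqrt (2*π) with hS2def
  set SN := Real.sqrt N with hSNdef
  set SL := Real.sqrt (π*L) with hSLdef
  have hS2 : 0 < S2 := Real.sqrt_pos.mpr (by positivity)
  have hSN : 0 < SN := Real.sqrt_pos.mpr hN
  have hSL : 0 < SL := Real.sqrt_pos.mpr (by positivity)
  have hprod : S2 * Real.sqrt (2*L) = 2 * SL := by
    rw [hS2def, hSLdef, ← Real.sqrt_mul (by positivity),
      show (2*π)*(2*L) = 4*(π*L) by ring,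
      Real.sqrt_mul (by norm_num : (0:ℝ) ≤ 4),
      show (4:ℝ) = 2^2 by norm_num, Real.sqrt_sq (by norm_num : (0:ℝ) ≤ 2)]
  have hineq : 2 * SL ≤ S2 * (SN * τ) := by
    rw [← hprod]
    exact mul_le_mul_of_nonneg_left hA hS2.le
  have hNN : N = SN * SN := (Real.mul_self_sqrt hN.le).symm
  rw [hNN]
  have lhs_eq : 2 * ((S2/SN)⁻¹ * ((SN*SN)⁻¹ * E/τ)) = 2*E/(S2*(SN*τ)) := by
    field_simp
  rw [lhs_eq, div_le_div_iff₀ (by positivity) hSL]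
  calc 2*E*SL = E * (2*SL) := by ring
    _ ≤ E * (S2*(SN*τ)) := mul_le_mul_of_nonneg_left hineq hE.le

lemma key_step {P b : ℕ} (blk : Fin P → Fin b) (βs : Fin P → ℝ)
    (τm βm : Fin b → ℝ) (n : ℕ) (hn : 1 ≤ n) (hτ : ∀ j, 0 < τm j)
    {Ω : Type} [MeasurableSpace Ω] (Pr : Measure Ω) [IsProbabilityMeasure Pr]
    (βt : Fin P → Ω → ℝ) (hmeas : ∀ i, Measurable (βt i))
    (hlaw : ∀ i, Measure.map (βt i) Pr = gaussianReal (βs i) ((n : ℝ≥0))⁻¹)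
    (hβm : ∀ i, βs i ≠ 0 → βm (blk i) ≤ |βs i|)
    (hcard : ∀ j, 1 < inactJ blk βs j ∧ 1 < actJ blk βs j)
    (h4 : ∀ j, Real.sqrt (2 * Real.log (inactJ blk βs j)) ≤ Real.sqrt n * τm j)
    (h5 : ∀ j, Real.sqrt (2 * Real.log (actJ blk βs j)) ≤
      Real.sqrt n * (βm j - τm j)) :
    (Pr {ω | ¬ ∀ i, (τm (blk i) < |βt i ω| ↔ βs i ≠ 0)}).toReal ≤
      ∑ j : Fin b,
        (Real.exp (-((n:ℝ) / 2) * (τm j ^ 2 -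
            2 * Real.log (inactJ blk βs j) / n)) /
          Real.sqrt (π * Real.log (inactJ blk βs j)) +
        Real.exp (-((n:ℝ) / 2) * ((βm j - τm j) ^ 2 -
            2 * Real.log (actJ blk βs j) / n)) /
          Real.sqrt (π * Real.log (actJ blk βs j))) := by
  have hNpos : (0:ℝ) < (n:ℝ) := by exact_mod_cast hn
  have hnn : ((n:ℝ≥0)) ≠ 0 := Nat.cast_ne_zero.mpr (by omega)
  set v : ℝ≥0 := ((n:ℝ≥0))⁻¹ with hvdef
  have hv : v ≠ 0 := inv_ne_zero hnn
  have hvr : ((v:ℝ)) = ((n:ℝ))⁻¹ := by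
    rw [hvdef]; push_cast; ring
  have hsqrtn : 0 < Real.sqrt n := Real.sqrt_pos.mpr hNpos
  -- positivity of logs and gaps
  have hLI : ∀ j, 0 < Real.log (inactJ blk βs j) := fun j =>
    Real.log_pos (by exact_mod_cast (hcard j).1)
  have hLA : ∀ j, 0 < Real.log (actJ blk βs j) := fun j =>
    Real.log_pos (by exact_mod_cast (hcard j).2)
  have hgap : ∀ j, 0 < βm j - τm j := by
    intro j
    have h1 : 0 < Real.sqrt (2 * Real.log (actJ blk βs j)) :=
      Real.sqrt_pos.mpr (by have := hLA j; linarith)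
    have h2 := lt_of_lt_of_le h1 (h5 j)
    nlinarith [hsqrtn]
  -- the bad events
  set bad : Fin P → Set Ω :=
    fun i => {ω | ¬ (τm (blk i) < |βt i ω| ↔ βs i ≠ 0)} with hbaddef
  have hE : {ω | ¬ ∀ i, (τm (blk i) < |βt i ω| ↔ βs i ≠ 0)} = ⋃ i, bad i := by
    ext ω; simp [hbaddef, not_forall]
  -- per-coordinate real bound
  set g : Fin P → ℝ := fun i =>
    if βs i = 0
    then Real.exp (-(n:ℝ) * τm (blk i)^2/2) /
      Real.sqrt (π * Real.log (inactJ blk βs (blk i)))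
    else Real.exp (-(n:ℝ) * (βm (blk i) - τm (blk i))^2/2) /
      Real.sqrt (π * Real.log (actJ blk βs (blk i))) with hgdef
  have claimA : ∀ i, (Pr (bad i)).toReal ≤ g i := by
    intro i
    by_cases h : βs i = 0
    · -- inactive coordinate
      have hsub : bad i ⊆ βt i ⁻¹' {x | τm (blk i) ≤ |x - βs i|} := by
        intro ω hω
        simp only [hbaddef, Set.mem_setOf_eq] at hω
        have hlt : τm (blk i) < |βt i ω| := by
          by_contra hc
          exact hω (iff_of_false hc (by simp [h]))
        simp only [Set.mem_preimage, Set.mem_setOf_eq, h, sub_zero]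
        exact hlt.le
      have hB : MeasurableSet {x : ℝ | τm (blk i) ≤ |x - βs i|} :=
        measurableSet_le measurable_const ((measurable_id.sub_const _).abs)
      have hle1 : Pr (bad i) ≤ gaussianReal (βs i) v {x | τm (blk i) ≤ |x - βs i|} := by
        rw [← hlaw i, Measure.map_apply (hmeas i) hB]
        exact measure_mono hsub
      have htail := gauss_tail_s9 (μ := βs i) hv (hτ (blk i))
      have hRS := real_step hNpos (hτ (blk i)) (hLI (blk i)) (h4 (blk i))
      rw [← hvr] at hRS
      have hbd : (Pr (bad i)).toReal ≤
          2 * ((Real.sqrt (2*π*(v:ℝ)))⁻¹ *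
            ((v:ℝ) * Real.exp (-(τm (blk i))^2/(2*(v:ℝ))) / τm (blk i))) := by
        apply ENNReal.toReal_le_of_le_ofReal
        · exact mul_nonneg (by norm_num)
            (mul_nonneg (inv_nonneg.mpr (Real.sqrt_nonneg _))
              (div_nonneg (mul_nonneg v.coe_nonneg (Real.exp_nonneg _))
                (hτ (blk i)).le))
        exact le_trans hle1 htail
      have hg : g i = Real.exp (-(n:ℝ) * (τm (blk i))^2/2) /
          Real.sqrt (π * Real.log (inactJ blk βs (blk i))) := by
        simp [hgdef, h]
      rw [hg]
      exact le_trans hbd hRS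
    · -- active coordinate
      have hsub : bad i ⊆ βt i ⁻¹' {x | βm (blk i) - τm (blk i) ≤ |x - βs i|} := by
        intro ω hω
        simp only [hbaddef, Set.mem_setOf_eq] at hω
        have hle : |βt i ω| ≤ τm (blk i) := by
          by_contra hc
          push_neg at hc
          exact hω (iff_of_true hc h)
        have h1 : βm (blk i) ≤ |βs i| := hβm i h
        have h2 : |βs i| - |βt i ω| ≤ |βt i ω - βs i| := by
          have := abs_sub_abs_le_abs_sub (βs i) (βt i ω)
          rw [abs_sub_comm] at this
          linarith
        simp only [Set.mem_preimage, Set.mem_setOf_eq]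
        linarith
      have hB : MeasurableSet {x : ℝ | βm (blk i) - τm (blk i) ≤ |x - βs i|} :=
        measurableSet_le measurable_const ((measurable_id.sub_const _).abs)
      have hle1 : Pr (bad i) ≤
          gaussianReal (βs i) v {x | βm (blk i) - τm (blk i) ≤ |x - βs i|} := by
        rw [← hlaw i, Measure.map_apply (hmeas i) hB]
        exact measure_mono hsub
      have htail := gauss_tail_s9 (μ := βs i) hv (hgap (blk i))
      have hRS := real_step hNpos (hgap (blk i)) (hLA (blk i)) (h5 (blk i))
      rw [← hvr] at hRS
      have hbd : (Pr (bad i)).toReal ≤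
          2 * ((Real.sqrt (2*π*(v:ℝ)))⁻¹ *
            ((v:ℝ) * Real.exp (-(βm (blk i) - τm (blk i))^2/(2*(v:ℝ))) /
              (βm (blk i) - τm (blk i)))) := by
        apply ENNReal.toReal_le_of_le_ofReal
        · exact mul_nonneg (by norm_num)
            (mul_nonneg (inv_nonneg.mpr (Real.sqrt_nonneg _))
              (div_nonneg (mul_nonneg v.coe_nonneg (Real.exp_nonneg _))
                (hgap (blk i)).le))
        exact le_trans hle1 htail
      have hg : g i = Real.exp (-(n:ℝ) * (βm (blk i) - τm (blk i))^2/2) /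
          Real.sqrt (π * Real.log (actJ blk βs (blk i))) := by
        simp [hgdef, h]
      rw [hg]
      exact le_trans hbd hRS
  -- union bound
  have hub : (Pr {ω | ¬ ∀ i, (τm (blk i) < |βt i ω| ↔ βs i ≠ 0)}).toReal ≤
      ∑ i : Fin P, (Pr (bad i)).toReal := by
    have h1 : Pr {ω | ¬ ∀ i, (τm (blk i) < |βt i ω| ↔ βs i ≠ 0)} ≤
        ∑ i : Fin P, Pr (bad i) := by
      rw [hE]
      exact measure_iUnion_fintype_le _ _
    have h2 : (∑ i : Fin P, Pr (bad i)) ≠ ⊤ :=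
      ENNReal.sum_ne_top.mpr (fun i _ => measure_ne_top _ _)
    calc (Pr {ω | ¬ ∀ i, (τm (blk i) < |βt i ω| ↔ βs i ≠ 0)}).toReal
        ≤ (∑ i : Fin P, Pr (bad i)).toReal := ENNReal.toReal_mono h2 h1
      _ = ∑ i : Fin P, (Pr (bad i)).toReal :=
          ENNReal.toReal_sum (fun i _ => measure_ne_top _ _)
  -- sum of per-coordinate bounds equals the RHS
  have claimB : ∑ i : Fin P, g i =
      ∑ j : Fin b,
        (Real.exp (-((n:ℝ) / 2) * (τm j ^ 2 -
            2 * Real.log (inactJ blk βs j) / n)) /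
          Real.sqrt (π * Real.log (inactJ blk βs j)) +
        Real.exp (-((n:ℝ) / 2) * ((βm j - τm j) ^ 2 -
            2 * Real.log (actJ blk βs j) / n)) /
          Real.sqrt (π * Real.log (actJ blk βs j))) := by
    rw [← Finset.sum_fiberwise Finset.univ blk g]
    apply Finset.sum_congr rfl
    intro j _
    rw [← Finset.sum_filter_add_sum_filter_not
      (Finset.univ.filter (fun i => blk i = j)) (fun i => βs i = 0) g]
    have hf1 : (Finset.univ.filter (fun i => blk i = j)).filter (fun i => βs i = 0)
        = Finset.univ.filter (fun i => blk i = j ∧ βs i = 0) := by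
      rw [Finset.filter_filter]
    have hf2 : (Finset.univ.filter (fun i => blk i = j)).filter (fun i => ¬ βs i = 0)
        = Finset.univ.filter (fun i => blk i = j ∧ βs i ≠ 0) := by
      rw [Finset.filter_filter]
    rw [hf1, hf2]
    have hsum1 : ∑ i ∈ Finset.univ.filter (fun i => blk i = j ∧ βs i = 0), g i
        = (inactJ blk βs j : ℝ) * (Real.exp (-(n:ℝ) * τm j^2/2) /
            Real.sqrt (π * Real.log (inactJ blk βs j))) := by
      rw [Finset.sum_congr rfl (g := fun _ => Real.exp (-(n:ℝ) * τm j^2/2) /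
            Real.sqrt (π * Real.log (inactJ blk βs j)))
        (fun i hi => by
          simp only [Finset.mem_filter] at hi
          simp [hgdef, hi.2.1, hi.2.2])]
      rw [Finset.sum_const, nsmul_eq_mul]
      rfl
    have hsum2 : ∑ i ∈ Finset.univ.filter (fun i => blk i = j ∧ βs i ≠ 0), g i
        = (actJ blk βs j : ℝ) * (Real.exp (-(n:ℝ) * (βm j - τm j)^2/2) /
            Real.sqrt (π * Real.log (actJ blk βs j))) := by
      rw [Finset.sum_congr rfl (g := fun _ => Real.exp (-(n:ℝ) * (βm j - τm j)^2/2) /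
            Real.sqrt (π * Real.log (actJ blk βs j)))
        (fun i hi => by
          simp only [Finset.mem_filter] at hi
          simp [hgdef, hi.2.1, hi.2.2])]
      rw [Finset.sum_const, nsmul_eq_mul]
      rfl
    rw [hsum1, hsum2]
    have hm : ∀ (m : ℕ) (t : ℝ), 1 < m →
        (m : ℝ) * (Real.exp (-(n:ℝ) * t^2/2) / Real.sqrt (π * Real.log m))
        = Real.exp (-((n:ℝ) / 2) * (t ^ 2 - 2 * Real.log m / n)) /
            Real.sqrt (π * Real.log m) := by
      intro m t hm1
      have hmpos : (0:ℝ) < m := by exact_mod_cast Nat.lt_of_lt_of_le Nat.zero_lt_one hm1.le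
      rw [show (m:ℝ) = Real.exp (Real.log m) from (Real.exp_log hmpos).symm]
      rw [mul_div_assoc', ← Real.exp_add]
      congr 2
      field_simp
      rw [Real.log_exp]; ring
    rw [hm _ (τm j) (hcard j).1, hm _ (βm j - τm j) (hcard j).2]
  calc (Pr {ω | ¬ ∀ i, (τm (blk i) < |βt i ω| ↔ βs i ≠ 0)}).toReal
      ≤ ∑ i : Fin P, (Pr (bad i)).toReal := hub
    _ ≤ ∑ i : Fin P, g i := Finset.sum_le_sum (fun i _ => claimA i)
    _ = _ := claimB

end AuxTail

/-- **Theorem 3.4, first part.** In the Gaussian sequence model with block structure,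
under Assumptions A4 and A5 and with `p_j − s_j > 1` and `s_j > 1` for every block,
for every sufficiently large `n`:
`P(Ŝᵇ ≠ S) ≤ ∑_j [ e^{−(n/2)(τ_j² − 2 ln(p_j−s_j)/n)}/√(π ln(p_j−s_j))
                 + e^{−(n/2)((β*_{min,j} − τ_j)² − 2 ln(s_j)/n)}/√(π ln s_j) ]`. -/
theorem stmt9 (b : ℕ) (p : ℕ → ℕ)
    (blk : (n : ℕ) → Fin (p n) → Fin b)
    (βs : (n : ℕ) → Fin (p n) → ℝ)
    (τ : ℕ → Fin b → ℝ) (hτ : ∀ n j, 0 < τ n j)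
    (Ω : ℕ → Type) [∀ n, MeasurableSpace (Ω n)]
    (Pr : (n : ℕ) → Measure (Ω n)) [∀ n, IsProbabilityMeasure (Pr n)]
    (βt : (n : ℕ) → Fin (p n) → Ω n → ℝ)
    (hmeas : ∀ n i, Measurable (βt n i))
    (hindep : ∀ n, iIndepFun (βt n) (Pr n))
    (hlaw : ∀ n i, Measure.map (βt n i) (Pr n) =
      gaussianReal (βs n i) ((n : ℝ≥0))⁻¹)
    (βmin : ℕ → Fin b → ℝ)
    (hβmin : ∀ n j, (∀ i : Fin (p n), blk n i = j → βs n i ≠ 0 → βmin n j ≤ |βs n i|) ∧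
      ∃ i : Fin (p n), blk n i = j ∧ βs n i ≠ 0 ∧ βmin n j = |βs n i|)
    (hcard : ∀ n j, 1 < inactJ (blk n) (βs n) j ∧ 1 < actJ (blk n) (βs n) j)
    (hA4 : ∀ j, ∀ᶠ n : ℕ in atTop,
      Real.sqrt (2 * Real.log (inactJ (blk n) (βs n) j)) ≤ Real.sqrt n * τ n j)
    (hA5 : ∀ j, ∀ᶠ n : ℕ in atTop,
      Real.sqrt (2 * Real.log (actJ (blk n) (βs n) j)) ≤
        Real.sqrt n * (βmin n j - τ n j)) :
    ∀ᶠ n : ℕ in atTop,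
      (Pr n {ω | ¬ ∀ i : Fin (p n),
          (τ n (blk n i) < |βt n i ω| ↔ βs n i ≠ 0)}).toReal ≤
        ∑ j : Fin b,
          (Real.exp (-(n / 2) * (τ n j ^ 2 -
              2 * Real.log (inactJ (blk n) (βs n) j) / n)) /
            Real.sqrt (Real.pi * Real.log (inactJ (blk n) (βs n) j)) +
          Real.exp (-(n / 2) * ((βmin n j - τ n j) ^ 2 -
              2 * Real.log (actJ (blk n) (βs n) j) / n)) /
            Real.sqrt (Real.pi * Real.log (actJ (blk n) (βs n) j))) := by
  have hA4' := eventually_all.mpr hA4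
  have hA5' := eventually_all.mpr hA5
  filter_upwards [hA4', hA5', eventually_ge_atTop 1] with n h4 h5 hn
  exact key_step (blk n) (βs n) (τ n) (βmin n) n hn (fun j => hτ n j) (Pr n) (βt n)
    (hmeas n) (hlaw n) (fun i hi => (hβmin n (blk n i)).1 i rfl hi) (hcard n) h4 h5
end

section
/- Let 𝓜 be a finite nonempty set, S ∈ 𝓜, and on a probability space let (C(M))_{M∈𝓜} be real-valued random variables. Define NC(M) = e^{C(M)} / Σ_{M'∈𝓜} e^{C(M')}, and let Ŝ^b be any 𝓜-valued random variable with NC(Ŝ^b) = max_{M∈𝓜} NC(M) almost surely. Then: (i) P(Ŝ^b ≠ S) ≤ 2 Σ_{M ∈ 𝓜∖{S}} E[NC(M)]; (ii) pointwise, for any two distinct M, M' ∈ 𝓜, NC(M) ≤ (1 + e^{C(M') − C(M)})^{-1}. (Lemma 4.2: the probability of incorrect selection is bounded by the expected total normalized score of incorrect models, and each normalized score is bounded via a pairwise comparison.) -/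
open MeasureTheory ProbabilityTheory Finset

/-- **Lemma 4.2.** Let `𝓜` be a finite nonempty set of models, `S ∈ 𝓜`, and let
`(C(M))_{M∈𝓜}` be real random variables. With
`NC(M) = e^{C(M)} / ∑_{M'} e^{C(M')}` and `Ŝᵇ` a random model maximizing `NC` a.s.:
(i) `P(Ŝᵇ ≠ S) ≤ 2 ∑_{M ≠ S} E[NC(M)]`;
(ii) for any distinct `M, M'` and every `ω`, `NC(M) ≤ (1 + e^{C(M') − C(M)})⁻¹`. -/
theorem stmt14 {Ω : Type*} [MeasurableSpace Ω] (P : Measure Ω) [IsProbabilityMeasure P]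
    (𝓜 : Type*) [Fintype 𝓜] [DecidableEq 𝓜] [Nonempty 𝓜]
    [MeasurableSpace 𝓜] [MeasurableSingletonClass 𝓜]
    (S : 𝓜) (C : 𝓜 → Ω → ℝ) (hC : ∀ M, Measurable (C M))
    (Shat : Ω → 𝓜) (hShat : Measurable Shat)
    (hmax : ∀ᵐ ω ∂P, ∀ M : 𝓜,
      Real.exp (C M ω) / ∑ M' : 𝓜, Real.exp (C M' ω) ≤
        Real.exp (C (Shat ω) ω) / ∑ M' : 𝓜, Real.exp (C M' ω)) :
    ((P {ω | Shat ω ≠ S}).toReal ≤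
        2 * ∑ M ∈ Finset.univ.erase S,
          ∫ ω, Real.exp (C M ω) / ∑ M' : 𝓜, Real.exp (C M' ω) ∂P) ∧
      ∀ M M' : 𝓜, M ≠ M' → ∀ ω,
        Real.exp (C M ω) / ∑ M'' : 𝓜, Real.exp (C M'' ω) ≤
          (1 + Real.exp (C M' ω - C M ω))⁻¹ := by
  have hDpos : ∀ ω, (0:ℝ) < ∑ M' : 𝓜, Real.exp (C M' ω) := fun ω =>
    Finset.sum_pos (fun _ _ => Real.exp_pos _) Finset.univ_nonempty
  set NC : 𝓜 → Ω → ℝ := fun M ω => Real.exp (C M ω) / ∑ M' : 𝓜, Real.exp (C M' ω) with hNCdef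
  have hNCnonneg : ∀ M ω, 0 ≤ NC M ω := fun M ω => div_nonneg (Real.exp_pos _).le (hDpos ω).le
  have hNCle1 : ∀ M ω, NC M ω ≤ 1 := fun M ω => by
    rw [hNCdef, div_le_one (hDpos ω)]
    exact Finset.single_le_sum (f := fun i => Real.exp (C i ω))
      (fun i _ => (Real.exp_pos _).le) (mem_univ M)
  have hsum : ∀ ω, ∑ M : 𝓜, NC M ω = 1 := fun ω => by
    rw [hNCdef, ← Finset.sum_div, div_self (hDpos ω).ne']
  constructor
  · have hmeas : ∀ M, Measurable (NC M) := fun M =>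
      (hC M).exp.div (Finset.measurable_sum _ (fun i _ => (hC i).exp))
    have hint : ∀ M, Integrable (NC M) P := fun M =>
      (integrable_const (1:ℝ)).mono' (hmeas M).aestronglyMeasurable
        (Filter.Eventually.of_forall fun ω => by
          rw [Real.norm_eq_abs, abs_of_nonneg (hNCnonneg M ω)]; exact hNCle1 M ω)
    have hset : MeasurableSet {ω | Shat ω ≠ S} :=
      (hShat (measurableSet_singleton S)).compl
    have hAE : ∀ᵐ ω ∂P,
        Set.indicator {ω | Shat ω ≠ S} (fun _ => (1:ℝ)) ω ≤
          2 * ∑ M ∈ Finset.univ.erase S, NC M ω := by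
      filter_upwards [hmax] with ω hω
      by_cases h : Shat ω ≠ S
      · rw [Set.indicator_of_mem (show ω ∈ {ω | Shat ω ≠ S} from h)]
        have h1 : NC S ω ≤ ∑ M ∈ Finset.univ.erase S, NC M ω :=
          le_trans (hω S)
            (Finset.single_le_sum (fun i _ => hNCnonneg i ω)
              (Finset.mem_erase.mpr ⟨h, mem_univ _⟩))
        have h2 : NC S ω + ∑ M ∈ Finset.univ.erase S, NC M ω = 1 := by
          rw [← hsum ω]
          exact Finset.add_sum_erase univ (fun M => NC M ω) (mem_univ S)
        linarith
      · rw [Set.indicator_of_notMem (show ω ∉ {ω | Shat ω ≠ S} from h)]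
        have := Finset.sum_nonneg (fun i (_ : i ∈ Finset.univ.erase S) => hNCnonneg i ω)
        linarith
    have heq : (P {ω | Shat ω ≠ S}).toReal =
        ∫ ω, Set.indicator {ω | Shat ω ≠ S} (fun _ => (1:ℝ)) ω ∂P := by
      rw [integral_indicator_const _ hset]; simp [Measure.real]
    rw [heq]
    calc ∫ ω, Set.indicator {ω | Shat ω ≠ S} (fun _ => (1:ℝ)) ω ∂P
        ≤ ∫ ω, 2 * ∑ M ∈ Finset.univ.erase S, NC M ω ∂P := by
          refine integral_mono_ae ?_ ?_ hAE
          · exact (integrable_const (1:ℝ)).indicator hset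
          · exact ((integrable_finset_sum _ (fun M _ => hint M)).const_mul 2)
      _ = 2 * ∑ M ∈ Finset.univ.erase S, ∫ ω, NC M ω ∂P := by
          rw [integral_const_mul, integral_finset_sum _ (fun M _ => hint M)]
  · intro M M' hne ω
    have h1 : Real.exp (C M ω) + Real.exp (C M' ω) ≤ ∑ M'' : 𝓜, Real.exp (C M'' ω) := by
      have : ∑ x ∈ ({M, M'} : Finset 𝓜), Real.exp (C x ω) =
          Real.exp (C M ω) + Real.exp (C M' ω) := by
        rw [Finset.sum_pair hne]
      rw [← this]
      exact Finset.sum_le_sum_of_subset_of_nonneg (Finset.subset_univ _)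
        (fun i _ _ => (Real.exp_pos _).le)
    have h2 : Real.exp (C M ω) / ∑ M'' : 𝓜, Real.exp (C M'' ω) ≤
        Real.exp (C M ω) / (Real.exp (C M ω) + Real.exp (C M' ω)) :=
      div_le_div_of_nonneg_left (Real.exp_pos _).le
        (by positivity) h1
    refine h2.trans_eq ?_
    rw [Real.exp_sub]
    have ha : Real.exp (C M ω) ≠ 0 := (Real.exp_pos _).ne'
    have hb : Real.exp (C M ω) + Real.exp (C M' ω) ≠ 0 := by positivity
    field_simp
end

section
/- Let X ∈ ℝ^{n×p}, let {1,…,p} be partitioned into blocks B_1,…,B_b, let β* ∈ ℝ^p with support S = {i : β*_i ≠ 0}, S_j = S ∩ B_j, β*_{min,j} = min_{i∈S_j}|β*_i|, and let 𝓜 be a collection of subsets M with X_M of full column rank such that {M' ∈ 𝓜 : M' ⊉ S} is nonempty. Define ρ(X) = min_{M' ∈ 𝓜, M' ⊉ S} λ_min( (1/n) X_{S∖M'}ᵀ (I_n − P_{M'}) X_{S∖M'} ), where P_M = X_M (X_Mᵀ X_M)^{-1} X_Mᵀ. Then for any M ∈ 𝓜, with Q_S = S ∪ M, the non-centrality quantity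 μ_{Q_S M} = ‖(I_n − P_M) X_{Q_S∖M} β*_{Q_S∖M}‖² satisfies μ_{Q_S M} ≥ n · ρ(X) · Σ_{j=1}^b |S_j ∖ M_j| · (β*_{min,j})². (Lemma 4.4: eigenvalue lower bound on the non-centrality parameter.) -/
open Finset Matrix

/-- The submatrix of `X` consisting of the columns indexed by `M`. -/
noncomputable def colsub {N P : ℕ} (X : Matrix (Fin N) (Fin P) ℝ) (M : Finset (Fin P)) :
    Matrix (Fin N) {i // i ∈ M} ℝ := fun r c => X r c.1

/-- The orthogonal projection `P_M = X_M (X_Mᵀ X_M)⁻¹ X_Mᵀ` onto the column span of `X_M`. -/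
noncomputable def projM {N P : ℕ} (X : Matrix (Fin N) (Fin P) ℝ) (M : Finset (Fin P)) :
    Matrix (Fin N) (Fin N) ℝ :=
  colsub X M * ((colsub X M)ᵀ * colsub X M)⁻¹ * (colsub X M)ᵀ

/-- The smallest eigenvalue of a symmetric real matrix, via its Rayleigh-quotient
(Courant–Fischer) characterization. -/
noncomputable def lammin {m : Type*} [Fintype m] (A : Matrix m m ℝ) : ℝ :=
  sInf {r : ℝ | ∃ x : m → ℝ, ∑ i, x i ^ 2 = 1 ∧ r = ∑ i, ∑ k, x i * A i k * x k}

/-- The restricted-eigenvalue quantity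
`ρ(X) = min_{M ∈ 𝓜, M ⊉ S} λ_min((1/n) X_{S∖M}ᵀ (I − P_M) X_{S∖M})`. -/
noncomputable def rhoX {N P : ℕ} (X : Matrix (Fin N) (Fin P) ℝ)
    (𝓜 : Finset (Finset (Fin P))) (S : Finset (Fin P)) : ℝ :=
  sInf {r : ℝ | ∃ M ∈ 𝓜, ¬ S ⊆ M ∧
    r = lammin ((N : ℝ)⁻¹ •
      ((colsub X (S \ M))ᵀ * (1 - projM X M) * colsub X (S \ M)))}

lemma dsum {m : Type*} [Fintype m] (A : Matrix m m ℝ) (x : m → ℝ) :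
    ∑ i, ∑ k, x i * A i k * x k = x ⬝ᵥ (A *ᵥ x) := by
  simp [dotProduct, Matrix.mulVec, Finset.mul_sum, mul_assoc]

lemma quadCB {n m : Type*} [Fintype n] [Fintype m] (B : Matrix n n ℝ) (C : Matrix n m ℝ)
    (x : m → ℝ) : x ⬝ᵥ ((Cᵀ * B * C) *ᵥ x) = (C *ᵥ x) ⬝ᵥ (B *ᵥ (C *ᵥ x)) := by
  rw [Matrix.mul_assoc, ← Matrix.mulVec_mulVec, Matrix.dotProduct_mulVec,
    Matrix.vecMul_transpose, ← Matrix.mulVec_mulVec]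

lemma selfadj_sq {n : Type*} [Fintype n] (B : Matrix n n ℝ) (hB : Bᵀ * B = B) (w : n → ℝ) :
    w ⬝ᵥ (B *ᵥ w) = (B *ᵥ w) ⬝ᵥ (B *ᵥ w) := by
  conv_lhs => rw [← hB]
  rw [← Matrix.mulVec_mulVec, Matrix.dotProduct_mulVec, Matrix.vecMul_transpose]

lemma gram_isUnit {n m : Type*} [Fintype n] [Fintype m] [DecidableEq m] (C : Matrix n m ℝ)
    (h : LinearIndependent ℝ (fun c : m => fun r => C r c)) : IsUnit (Cᵀ * C).det := by
  rw [← Matrix.isUnit_iff_isUnit_det, ← Matrix.mulVec_injective_iff_isUnit]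
  have key : ∀ x, (Cᵀ * C) *ᵥ x = 0 → x = 0 := by
    intro x hx
    have h1 : (C *ᵥ x) ⬝ᵥ (C *ᵥ x) = 0 := by
      have : x ⬝ᵥ ((Cᵀ * C) *ᵥ x) = 0 := by rw [hx, dotProduct_zero]
      rwa [← Matrix.mulVec_mulVec, Matrix.dotProduct_mulVec, Matrix.vecMul_transpose] at this
    have h2 : C *ᵥ x = 0 := by rwa [dotProduct_self_eq_zero] at h1
    have h3 := Fintype.linearIndependent_iff.mp h x ?_
    · exact funext h3
    · funext r
      have := congrFun h2 r
      simpa [Matrix.mulVec, dotProduct, mul_comm] using this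
  intro x y hxy
  have : (Cᵀ * C) *ᵥ (x - y) = 0 := by rw [Matrix.mulVec_sub, hxy, sub_self]
  exact sub_eq_zero.mp (key _ this)

lemma projB {N P : ℕ} (X : Matrix (Fin N) (Fin P) ℝ) (M : Finset (Fin P))
    (h : LinearIndependent ℝ (fun c : {i // i ∈ M} => fun r => X r c.1)) :
    (1 - projM X M)ᵀ * (1 - projM X M) = 1 - projM X M := by
  set C := colsub X M with hC
  have hG : IsUnit (Cᵀ * C).det := gram_isUnit C h
  have hsymm : (projM X M)ᵀ = projM X M := by
    unfold projM
    rw [← hC, Matrix.transpose_mul, Matrix.transpose_mul, Matrix.transpose_transpose,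
      Matrix.transpose_nonsing_inv, Matrix.transpose_mul, Matrix.transpose_transpose,
      Matrix.mul_assoc]
  have hidem : projM X M * projM X M = projM X M := by
    unfold projM
    rw [← hC]
    calc C * (Cᵀ * C)⁻¹ * Cᵀ * (C * (Cᵀ * C)⁻¹ * Cᵀ)
        = C * (Cᵀ * C)⁻¹ * ((Cᵀ * C) * (Cᵀ * C)⁻¹) * Cᵀ := by
          simp only [Matrix.mul_assoc]
      _ = C * (Cᵀ * C)⁻¹ * Cᵀ := by
          rw [Matrix.mul_nonsing_inv _ hG, Matrix.mul_one]
  rw [Matrix.transpose_sub, Matrix.transpose_one, hsymm, Matrix.sub_mul, Matrix.mul_sub,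
    Matrix.mul_sub, Matrix.one_mul, Matrix.one_mul, Matrix.mul_one, hidem]
  abel

lemma ray_nonneg {n m : Type*} [Fintype n] [Fintype m] (c : ℝ) (hc : 0 ≤ c)
    (B : Matrix n n ℝ) (hB : Bᵀ * B = B) (C : Matrix n m ℝ) (x : m → ℝ) :
    0 ≤ ∑ i, ∑ k, x i * ((c • (Cᵀ * B * C)) i k) * x k := by
  have e : ∀ i k, x i * ((c • (Cᵀ * B * C)) i k) * x k
      = c * (x i * (Cᵀ * B * C) i k * x k) := by
    intro i k; simp [Matrix.smul_apply]; ring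
  simp_rw [e, ← Finset.mul_sum]
  rw [dsum, quadCB, selfadj_sq _ hB]
  exact mul_nonneg hc (Finset.sum_nonneg fun i _ => mul_self_nonneg _)

lemma lammin_nonneg {m : Type*} [Fintype m] (A : Matrix m m ℝ)
    (h0 : ∀ x : m → ℝ, 0 ≤ ∑ i, ∑ k, x i * A i k * x k) : 0 ≤ lammin A :=
  Real.sInf_nonneg (fun _ ⟨x, _, hr⟩ => hr ▸ h0 x)

lemma lammin_mul_le {m : Type*} [Fintype m] (A : Matrix m m ℝ)
    (h0 : ∀ x : m → ℝ, 0 ≤ ∑ i, ∑ k, x i * A i k * x k) (x : m → ℝ) :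
    lammin A * (∑ i, x i ^ 2) ≤ ∑ i, ∑ k, x i * A i k * x k := by
  set t := ∑ i, x i ^ 2 with ht
  have ht0 : 0 ≤ t := Finset.sum_nonneg (fun i _ => sq_nonneg _)
  rcases eq_or_lt_of_le ht0 with h | h
  · rw [← h, mul_zero]; exact h0 x
  · set c := (Real.sqrt t)⁻¹ with hc
    have hc2 : c ^ 2 = t⁻¹ := by rw [hc, inv_pow, Real.sq_sqrt ht0]
    have hu : ∑ i, (c * x i) ^ 2 = 1 := by
      simp_rw [mul_pow, ← Finset.mul_sum]
      rw [← ht, hc2, inv_mul_cancel₀ (ne_of_gt h)]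
    have hR : ∑ i, ∑ k, (c * x i) * A i k * (c * x k)
        = t⁻¹ * ∑ i, ∑ k, x i * A i k * x k := by
      have e : ∀ i k, (c * x i) * A i k * (c * x k) = c ^ 2 * (x i * A i k * x k) := by
        intros; ring
      simp_rw [e, ← Finset.mul_sum, hc2]
    have hmem : lammin A ≤ ∑ i, ∑ k, (c * x i) * A i k * (c * x k) := by
      apply csInf_le
      · exact ⟨0, fun r ⟨y, _, hr⟩ => hr ▸ h0 y⟩
      · exact ⟨fun i => c * x i, hu, rfl⟩
    calc lammin A * t ≤ (t⁻¹ * ∑ i, ∑ k, x i * A i k * x k) * t := by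
          apply mul_le_mul_of_nonneg_right _ ht0
          exact hmem.trans_eq hR
      _ = ∑ i, ∑ k, x i * A i k * x k := by field_simp

/-- **Lemma 4.4.** For any model `M ∈ 𝓜`, with `Q_S = S ∪ M`, the non-centrality
quantity `μ_{Q_S M} = ‖(I − P_M) X_{Q_S∖M} β*_{Q_S∖M}‖²` satisfies
`μ_{Q_S M} ≥ n ρ(X) ∑_j |S_j ∖ M_j| (β*_{min,j})²` (here `Q_S ∖ M = S ∖ M`). -/
theorem stmt15 {N P : ℕ} (b : ℕ) (X : Matrix (Fin N) (Fin P) ℝ) (blk : Fin P → Fin b)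
    (βs : Fin P → ℝ)
    (𝓜 : Finset (Finset (Fin P)))
    (hrank : ∀ M ∈ 𝓜, LinearIndependent ℝ (fun c : {i // i ∈ M} => fun r => X r c.1))
    (hne : ∃ M ∈ 𝓜, ¬ (Finset.univ.filter (fun i => βs i ≠ 0)) ⊆ M)
    (M : Finset (Fin P)) (hM : M ∈ 𝓜) :
    (N : ℝ) * rhoX X 𝓜 (Finset.univ.filter (fun i => βs i ≠ 0)) *
        ∑ j : Fin b,
          ((((Finset.univ.filter (fun i => blk i = j ∧ βs i ≠ 0)) \ M).card : ℝ) *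
            (sInf {x : ℝ | ∃ i, blk i = j ∧ βs i ≠ 0 ∧ x = |βs i|}) ^ 2) ≤
      ∑ r, (((1 - projM X M) *ᵥ (X *ᵥ fun i =>
          if i ∈ (Finset.univ.filter (fun i' => βs i' ≠ 0)) \ M then βs i else 0)) r) ^ 2 := by
  classical
  set S := Finset.univ.filter (fun i => βs i ≠ 0) with hSdef
  have hRHSnn : (0:ℝ) ≤ ∑ r, (((1 - projM X M) *ᵥ (X *ᵥ fun i =>
      if i ∈ S \ M then βs i else 0)) r) ^ 2 :=
    Finset.sum_nonneg fun r _ => sq_nonneg _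
  by_cases hSM : S ⊆ M
  · -- trivial case: each `S_j \ M` is empty
    have hz : ∀ j : Fin b,
        ((Finset.univ.filter (fun i => blk i = j ∧ βs i ≠ 0)) \ M) = ∅ := by
      intro j
      rw [Finset.sdiff_eq_empty_iff_subset]
      intro i hi
      simp only [Finset.mem_filter, Finset.mem_univ, true_and] at hi
      exact hSM (by simp [hSdef, hi.2])
    have : ∑ j : Fin b,
        ((((Finset.univ.filter (fun i => blk i = j ∧ βs i ≠ 0)) \ M).card : ℝ) *
          (sInf {x : ℝ | ∃ i, blk i = j ∧ βs i ≠ 0 ∧ x = |βs i|}) ^ 2) = 0 := by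
      apply Finset.sum_eq_zero
      intro j _
      rw [hz j]
      simp
    rw [this, mul_zero]
    exact hRHSnn
  · -- main case
    by_cases hN : (N : ℝ) = 0
    · calc (N : ℝ) * rhoX X 𝓜 S * _ = 0 := by rw [hN, zero_mul, zero_mul]
        _ ≤ _ := hRHSnn
    have hN0 : (0:ℝ) ≤ (N:ℝ) := Nat.cast_nonneg N
    set D := S \ M with hDdef
    set C := colsub X D with hCdef
    set B := (1 : Matrix (Fin N) (Fin N) ℝ) - projM X M with hBdef
    have hB : Bᵀ * B = B := projB X M (hrank M hM)
    set x : {i // i ∈ D} → ℝ := fun i => βs i.1 with hxdef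
    set A : Matrix {i // i ∈ D} {i // i ∈ D} ℝ := (N : ℝ)⁻¹ • (Cᵀ * B * C) with hAdef
    have hA0 : ∀ y : {i // i ∈ D} → ℝ, 0 ≤ ∑ i, ∑ k, y i * A i k * y k := by
      intro y
      exact ray_nonneg _ (by positivity) _ hB _ y
    -- rho is nonneg, and rho ≤ lammin A
    have hρ0 : 0 ≤ rhoX X 𝓜 S := by
      apply Real.sInf_nonneg
      rintro r ⟨M', hM', _, hr⟩
      subst hr
      exact lammin_nonneg _ (fun y =>
        ray_nonneg _ (by positivity) _ (projB X M' (hrank M' hM')) _ y)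
    have hρle : rhoX X 𝓜 S ≤ lammin A := by
      apply csInf_le
      · refine ⟨0, ?_⟩
        rintro r ⟨M', hM', _, hr⟩
        subst hr
        exact lammin_nonneg _ (fun y =>
          ray_nonneg _ (by positivity) _ (projB X M' (hrank M' hM')) _ y)
      · exact ⟨M, hM, hSM, rfl⟩
    -- identify the model vector
    have hv : (X *ᵥ fun i => if i ∈ D then βs i else 0) = C *ᵥ x := by
      funext r
      simp only [Matrix.mulVec, dotProduct, hCdef, colsub, hxdef]
      rw [Finset.sum_coe_sort D (fun i => X r i * βs i)]
      simp only [mul_ite, mul_zero]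
      rw [Finset.sum_ite_mem, Finset.univ_inter]
    -- RHS = N * (xᵀ A x)
    have hquad : ∑ i, ∑ k, x i * A i k * x k
        = (N : ℝ)⁻¹ * ((B *ᵥ (C *ᵥ x)) ⬝ᵥ (B *ᵥ (C *ᵥ x))) := by
      have e : ∀ i k, x i * A i k * x k
          = (N : ℝ)⁻¹ * (x i * (Cᵀ * B * C) i k * x k) := by
        intro i k; simp [hAdef, Matrix.smul_apply]; ring
      simp_rw [e, ← Finset.mul_sum]
      rw [dsum, quadCB, selfadj_sq _ hB]
    have hgoal : ∑ r, (((1 - projM X M) *ᵥ (X *ᵥ fun i =>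
        if i ∈ D then βs i else 0)) r) ^ 2
        = (N : ℝ) * ∑ i, ∑ k, x i * A i k * x k := by
      rw [hv, hquad, ← mul_assoc, mul_inv_cancel₀ hN, one_mul]
      simp [dotProduct, sq, hBdef]
    rw [hgoal]
    -- the block-sum bound
    set t := ∑ i : {i // i ∈ D}, x i ^ 2 with htdef
    have ht0 : 0 ≤ t := Finset.sum_nonneg fun i _ => sq_nonneg _
    have hσt : ∑ j : Fin b,
        ((((Finset.univ.filter (fun i => blk i = j ∧ βs i ≠ 0)) \ M).card : ℝ) *
          (sInf {x : ℝ | ∃ i, blk i = j ∧ βs i ≠ 0 ∧ x = |βs i|}) ^ 2) ≤ t := by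
      have ht' : t = ∑ i ∈ D, βs i ^ 2 := Finset.sum_coe_sort D (fun i => βs i ^ 2)
      rw [ht', ← Finset.sum_fiberwise D blk (fun i => βs i ^ 2)]
      apply Finset.sum_le_sum
      intro j _
      have hfib : D.filter (fun i => blk i = j)
          = (Finset.univ.filter (fun i => blk i = j ∧ βs i ≠ 0)) \ M := by
        ext i
        simp only [Finset.mem_filter, Finset.mem_sdiff, Finset.mem_univ, true_and, hDdef,
          hSdef]
        tauto
      rw [hfib]
      set T := (Finset.univ.filter (fun i => blk i = j ∧ βs i ≠ 0)) \ M with hTdef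
      set m := sInf {x : ℝ | ∃ i, blk i = j ∧ βs i ≠ 0 ∧ x = |βs i|} with hmdef
      have hm0 : 0 ≤ m := by
        apply Real.sInf_nonneg
        rintro r ⟨i, _, _, hr⟩
        subst hr; exact abs_nonneg _
      calc (T.card : ℝ) * m ^ 2 = ∑ _i ∈ T, m ^ 2 := by
            rw [Finset.sum_const, nsmul_eq_mul]
        _ ≤ ∑ i ∈ T, βs i ^ 2 := by
            apply Finset.sum_le_sum
            intro i hi
            simp only [hTdef, Finset.mem_sdiff, Finset.mem_filter, Finset.mem_univ,
              true_and] at hi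
            have hmem : |βs i| ∈ {x : ℝ | ∃ i', blk i' = j ∧ βs i' ≠ 0 ∧ x = |βs i'|} :=
              ⟨i, hi.1.1, hi.1.2, rfl⟩
            have hle : m ≤ |βs i| := by
              apply csInf_le _ hmem
              refine ⟨0, ?_⟩
              rintro r ⟨i', _, _, hr⟩
              subst hr; exact abs_nonneg _
            calc m ^ 2 ≤ |βs i| ^ 2 := pow_le_pow_left₀ hm0 hle 2
              _ = βs i ^ 2 := sq_abs _
    -- final chain
    calc (N : ℝ) * rhoX X 𝓜 S * ∑ j : Fin b,
          ((((Finset.univ.filter (fun i => blk i = j ∧ βs i ≠ 0)) \ M).card : ℝ) *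
            (sInf {x : ℝ | ∃ i, blk i = j ∧ βs i ≠ 0 ∧ x = |βs i|}) ^ 2)
        ≤ (N : ℝ) * rhoX X 𝓜 S * t :=
          mul_le_mul_of_nonneg_left hσt (mul_nonneg hN0 hρ0)
      _ ≤ (N : ℝ) * (lammin A * t) := by
          rw [mul_assoc]
          apply mul_le_mul_of_nonneg_left _ hN0
          exact mul_le_mul_of_nonneg_right hρle ht0
      _ ≤ (N : ℝ) * ∑ i, ∑ k, x i * A i k * x k :=
          mul_le_mul_of_nonneg_left (lammin_mul_le A hA0 x) hN0
end

section
/- Let X ∈ ℝ^{n×p}, let {1,…,p} be partitioned into blocks B_1,…,B_b, and let β* ∈ ℝ^p with support S = {i : β*_i ≠ 0}, S_j = S ∩ B_j. Assume X_S has full column rank, let T ⊆ S be such that X_T has full column rank, set T_j = T ∩ B_j, P_T = X_T(X_Tᵀ X_T)^{-1}X_Tᵀ, and μ_{ST} = ‖(I_n − P_T) X_{S∖T} β*_{S∖T}‖². Then μ_{ST} ≤ n · λ̄ · Σ_{j=1}^b |S_j ∖ T_j| · max_{i ∈ S_j∖T_j} (β*_i)², where λ̄ = λ_max( (1/n) X_Sᵀ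 X_S ). (Lemma 4.7: upper bound on the non-centrality parameter of under-fitted models by the largest missed signals.) -/
open Finset Matrix

/-- The largest eigenvalue of a symmetric real matrix, via its Rayleigh-quotient
(Courant–Fischer) characterization. -/
noncomputable def lammax {m : Type*} [Fintype m] (A : Matrix m m ℝ) : ℝ :=
  sSup {r : ℝ | ∃ x : m → ℝ, ∑ i, x i ^ 2 = 1 ∧ r = ∑ i, ∑ k, x i * A i k * x k}

lemma dps_nonneg {m : Type*} [Fintype m] (y : m → ℝ) : (0:ℝ) ≤ y ⬝ᵥ y :=
  Finset.sum_nonneg fun _ _ => mul_self_nonneg _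

lemma proj_contract {N : ℕ} {ι : Type*} [Fintype ι] [DecidableEq ι] (M : Matrix (Fin N) ι ℝ)
    (hM : Function.Injective M.mulVec) (u : Fin N → ℝ) :
    ∑ r, (((1 - M * (Mᵀ * M)⁻¹ * Mᵀ) *ᵥ u) r) ^ 2 ≤ ∑ r, (u r) ^ 2 := by
  set G := Mᵀ * M with hG
  have hGpd : G.PosDef := by
    refine PosDef.of_dotProduct_mulVec_pos (by have := isHermitian_conjTranspose_mul_self M; rwa [conjTranspose_eq_transpose_of_trivial] at this) fun x hx => ?_
    have h1 : M *ᵥ x ≠ 0 := by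
      intro h
      exact hx (hM (by simp [h]))
    have hs : star x = x := by funext j; simp
    have h2 : star x ⬝ᵥ (G *ᵥ x) = (M *ᵥ x) ⬝ᵥ (M *ᵥ x) := by
      rw [hs, hG, ← mulVec_mulVec, dotProduct_mulVec, vecMul_transpose]
    have h3 : (0:ℝ) < (M *ᵥ x) ⬝ᵥ (M *ᵥ x) := by
      rcases (dps_nonneg (M *ᵥ x)).lt_or_eq with h | h
      · exact h
      · exact absurd (dotProduct_self_eq_zero.mp h.symm) h1
    rw [h2]; exact h3
  have hdet : IsUnit G.det := hGpd.det_pos.ne'.isUnit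
  have hinv : G⁻¹ * G = 1 := nonsing_inv_mul G hdet
  have hGsym : Gᵀ = G := by rw [hG, transpose_mul, transpose_transpose]
  have hGinvsym : (G⁻¹)ᵀ = G⁻¹ := by rw [transpose_nonsing_inv, hGsym]
  set Pm := M * G⁻¹ * Mᵀ with hPm
  have hPsym : Pmᵀ = Pm := by
    rw [hPm, transpose_mul, transpose_mul, transpose_transpose, hGinvsym, Matrix.mul_assoc]
  have hPP : Pm * Pm = Pm := by
    rw [hPm]
    calc M * G⁻¹ * Mᵀ * (M * G⁻¹ * Mᵀ) = M * (G⁻¹ * (Mᵀ * M) * G⁻¹) * Mᵀ := by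
          simp only [Matrix.mul_assoc]
      _ = M * G⁻¹ * Mᵀ := by rw [← hG, hinv, Matrix.one_mul]
  have key : ∀ y : Fin N → ℝ, ∑ r, (y r)^2 = y ⬝ᵥ y := by
    intro y; simp [dotProduct, pow_two]
  rw [key, key]
  have hE : (1 - Pm) *ᵥ u = u - Pm *ᵥ u := by
    rw [Matrix.sub_mulVec, Matrix.one_mulVec]
  rw [hE]
  have hcross : u ⬝ᵥ (Pm *ᵥ u) = (Pm *ᵥ u) ⬝ᵥ (Pm *ᵥ u) := by
    conv_lhs => rw [← hPP, ← mulVec_mulVec, dotProduct_mulVec, ← hPsym, vecMul_transpose]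
    rw [hPsym]
  have hcross2 : (Pm *ᵥ u) ⬝ᵥ u = (Pm *ᵥ u) ⬝ᵥ (Pm *ᵥ u) := by
    rw [dotProduct_comm, hcross]
  have hnn : (0:ℝ) ≤ (Pm *ᵥ u) ⬝ᵥ (Pm *ᵥ u) := dps_nonneg _
  rw [sub_dotProduct, dotProduct_sub, dotProduct_sub, hcross, hcross2]
  linarith

lemma rayleigh_le {m : Type*} [Fintype m] (A : Matrix m m ℝ) (x : m → ℝ)
    (hx : ∑ i, x i ^ 2 = 1) : ∑ i, ∑ k, x i * A i k * x k ≤ lammax A := by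
  apply le_csSup
  · refine ⟨∑ i, ∑ k, |A i k|, ?_⟩
    rintro r ⟨y, hy, rfl⟩
    have hyb : ∀ i, |y i| ≤ 1 := by
      intro i
      have h1 : y i ^ 2 ≤ 1 := by
        rw [← hy]
        exact Finset.single_le_sum (fun k _ => sq_nonneg (y k)) (Finset.mem_univ i)
      nlinarith [abs_nonneg (y i), sq_abs (y i)]
    refine Finset.sum_le_sum fun i _ => Finset.sum_le_sum fun k _ => ?_
    calc y i * A i k * y k ≤ |y i * A i k * y k| := le_abs_self _
      _ = |y i| * |A i k| * |y k| := by rw [abs_mul, abs_mul]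
      _ ≤ 1 * |A i k| * 1 := by
          refine mul_le_mul (mul_le_mul_of_nonneg_right (hyb i) (abs_nonneg _)) (hyb k)
            (abs_nonneg _) ?_
          positivity
      _ = |A i k| := by ring
  · exact ⟨x, hx, rfl⟩

/-- **Lemma 4.7.** For `T ⊆ S` with `X_T` and `X_S` of full column rank, the
non-centrality quantity `μ_{ST} = ‖(I − P_T) X_{S∖T} β*_{S∖T}‖²` satisfies
`μ_{ST} ≤ n λ̄ ∑_j |S_j ∖ T_j| max_{i ∈ S_j∖T_j} (β*_i)²`, where
`λ̄ = λ_max((1/n) X_Sᵀ X_S)`. -/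
theorem stmt16 {N P : ℕ} (b : ℕ) (X : Matrix (Fin N) (Fin P) ℝ) (blk : Fin P → Fin b)
    (βs : Fin P → ℝ)
    (T : Finset (Fin P))
    (hTS : T ⊆ Finset.univ.filter (fun i => βs i ≠ 0))
    (hrankT : LinearIndependent ℝ (fun c : {i // i ∈ T} => fun r => X r c.1))
    (hrankS : LinearIndependent ℝ
      (fun c : {i // i ∈ Finset.univ.filter (fun i' => βs i' ≠ 0)} => fun r => X r c.1)) :
    ∑ r, (((1 - projM X T) *ᵥ (X *ᵥ fun i =>
        if i ∈ (Finset.univ.filter (fun i' => βs i' ≠ 0)) \ T then βs i else 0)) r) ^ 2 ≤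
      (N : ℝ) *
        lammax ((N : ℝ)⁻¹ •
          ((colsub X (Finset.univ.filter (fun i => βs i ≠ 0)))ᵀ *
            colsub X (Finset.univ.filter (fun i => βs i ≠ 0)))) *
        ∑ j : Fin b,
          ((((Finset.univ.filter (fun i => blk i = j ∧ βs i ≠ 0)) \ T).card : ℝ) *
            sSup {x : ℝ | ∃ i, blk i = j ∧ βs i ≠ 0 ∧ i ∉ T ∧ x = βs i ^ 2}) := by
  classical
  set S : Finset (Fin P) := Finset.univ.filter (fun i => βs i ≠ 0) with hS
  set v : Fin P → ℝ := fun i => if i ∈ S \ T then βs i else 0 with hv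
  -- empty case
  by_cases hne : (S \ T).Nonempty
  case neg =>
    have hSThat : S \ T = ∅ := Finset.not_nonempty_iff_eq_empty.mp hne
    have hv0 : v = 0 := by
      funext i
      simp only [hv]
      rw [hSThat]
      simp
    have hAj : ∀ j : Fin b,
        (Finset.univ.filter (fun i => blk i = j ∧ βs i ≠ 0)) \ T = ∅ := by
      intro j
      rw [Finset.eq_empty_iff_forall_notMem]
      intro i hi
      simp only [Finset.mem_sdiff, Finset.mem_filter, Finset.mem_univ, true_and] at hi
      have : i ∈ S \ T := by
        simp only [hS, Finset.mem_sdiff, Finset.mem_filter, Finset.mem_univ, true_and]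
        exact ⟨hi.1.2, hi.2⟩
      rw [hSThat] at this
      exact absurd this (Finset.notMem_empty i)
    rw [hv0]
    simp [Matrix.mulVec_zero, hAj]
  case pos =>
  rcases Nat.eq_zero_or_pos N with hN | hN
  · subst hN
    simp
  have hNpos : (0:ℝ) < (N:ℝ) := by exact_mod_cast hN
  -- Step A : projection contracts
  have hMinjT : Function.Injective (colsub X T).mulVec :=
    Matrix.mulVec_injective_iff.mpr hrankT
  have step1 : ∑ r, (((1 - projM X T) *ᵥ (X *ᵥ v)) r) ^ 2 ≤ ∑ r, ((X *ᵥ v) r) ^ 2 := by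
    have := proj_contract (colsub X T) hMinjT (X *ᵥ v)
    simpa [projM] using this
  set MS := colsub X S with hMS
  set u' : {i // i ∈ S} → ℝ := fun c => v c.1 with hu'
  have hXv : X *ᵥ v = MS *ᵥ u' := by
    funext r
    show ∑ i, X r i * v i = ∑ c : {i // i ∈ S}, MS r c * u' c
    have h1 : ∑ c : {i // i ∈ S}, MS r c * u' c = ∑ i ∈ S, X r i * v i := by
      rw [← Finset.sum_coe_sort S (fun i => X r i * v i)]
      rfl
    rw [h1]
    refine (Finset.sum_subset (Finset.subset_univ S) fun i _ hiS => ?_).symm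
    have : v i = 0 := if_neg (fun h => hiS (Finset.mem_sdiff.mp h).1)
    rw [this, mul_zero]
  set G := MSᵀ * MS with hG
  set Q := u' ⬝ᵥ (G *ᵥ u') with hQ
  have step2 : ∑ r, ((MS *ᵥ u') r) ^ 2 = Q := by
    have h1 : ∑ r, ((MS *ᵥ u') r) ^ 2 = (MS *ᵥ u') ⬝ᵥ (MS *ᵥ u') := by
      simp [dotProduct, pow_two]
    rw [h1, hQ, hG]
    conv_rhs => rw [← mulVec_mulVec, dotProduct_mulVec, vecMul_transpose]
  have hQnn : 0 ≤ Q := by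
    rw [← step2]
    positivity
  set c := ∑ i : {i // i ∈ S}, (u' i) ^ 2 with hc
  have hcpos : 0 < c := by
    obtain ⟨i0, hi0⟩ := hne
    have hi0S : i0 ∈ S := (Finset.mem_sdiff.mp hi0).1
    refine Finset.sum_pos' (fun i _ => sq_nonneg _) ⟨⟨i0, hi0S⟩, Finset.mem_univ _, ?_⟩
    have hvi : u' ⟨i0, hi0S⟩ = βs i0 := by
      simp only [hu', hv, if_pos hi0]
    rw [hvi]
    have : βs i0 ≠ 0 := by
      have := hi0S
      rw [hS] at this
      simpa using this
    positivity
  have hcc : (Real.sqrt c)⁻¹ * (Real.sqrt c)⁻¹ = c⁻¹ := by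
    rw [← mul_inv, Real.mul_self_sqrt hcpos.le]
  set A := (N:ℝ)⁻¹ • G with hA
  set xx : {i // i ∈ S} → ℝ := fun i => (Real.sqrt c)⁻¹ * u' i with hxx
  have hx1 : ∑ i, xx i ^ 2 = 1 := by
    have : ∑ i, xx i ^ 2 = (Real.sqrt c)⁻¹ ^ 2 * c := by
      rw [hc, Finset.mul_sum]
      exact Finset.sum_congr rfl fun i _ => by rw [hxx]; ring
    rw [this, pow_two, hcc, inv_mul_cancel₀ hcpos.ne']
  have hQsum : ∑ i, ∑ k, u' i * G i k * u' k = Q := by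
    simp [hQ, dotProduct, mulVec, Finset.mul_sum, mul_assoc]
  have hxA : ∑ i, ∑ k, xx i * A i k * xx k = c⁻¹ * ((N:ℝ)⁻¹ * Q) := by
    have hterm : ∀ i k, xx i * A i k * xx k
        = (c⁻¹ * (N:ℝ)⁻¹) * (u' i * G i k * u' k) := by
      intro i k
      have h1 : xx i * A i k * xx k
          = ((Real.sqrt c)⁻¹ * (Real.sqrt c)⁻¹) * ((N:ℝ)⁻¹ * (u' i * G i k * u' k)) := by
        simp only [hxx, hA, Matrix.smul_apply, smul_eq_mul]
        ring
      rw [h1, hcc]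
      ring
    calc ∑ i, ∑ k, xx i * A i k * xx k
        = ∑ i, ∑ k, (c⁻¹ * (N:ℝ)⁻¹) * (u' i * G i k * u' k) := by
          exact Finset.sum_congr rfl fun i _ => Finset.sum_congr rfl fun k _ => hterm i k
      _ = (c⁻¹ * (N:ℝ)⁻¹) * ∑ i, ∑ k, u' i * G i k * u' k := by
          rw [Finset.mul_sum]
          exact Finset.sum_congr rfl fun i _ => (Finset.mul_sum _ _ _).symm
      _ = c⁻¹ * ((N:ℝ)⁻¹ * Q) := by rw [hQsum]; ring
  have hray : c⁻¹ * ((N:ℝ)⁻¹ * Q) ≤ lammax A := by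
    rw [← hxA]
    exact rayleigh_le A xx hx1
  have hlamnn : 0 ≤ lammax A := le_trans (by positivity) hray
  have hQle : Q ≤ (N:ℝ) * lammax A * c := by
    have h := mul_le_mul_of_nonneg_left hray (le_of_lt (mul_pos hNpos hcpos))
    have heq : ((N:ℝ) * c) * (c⁻¹ * ((N:ℝ)⁻¹ * Q)) = Q := by
      field_simp
    rw [heq] at h
    calc Q ≤ (N:ℝ) * c * lammax A := h
      _ = (N:ℝ) * lammax A * c := by ring
  -- Step D : bound c
  have hc_eq : c = ∑ i ∈ S \ T, βs i ^ 2 := by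
    rw [hc, Finset.sum_coe_sort S (fun i => v i ^ 2)]
    rw [← Finset.sum_subset (Finset.sdiff_subset : S \ T ⊆ S) (fun i _ hiST => by
      simp only [hv, if_neg hiST]; ring)]
    exact Finset.sum_congr rfl fun i hi => congrArg (· ^ 2) (if_pos hi)
  have hfib : ∑ i ∈ S \ T, βs i ^ 2
      = ∑ j : Fin b, ∑ i ∈ (S \ T).filter (fun i => blk i = j), βs i ^ 2 :=
    (Finset.sum_fiberwise _ _ _).symm
  have hsetj : ∀ j : Fin b, (S \ T).filter (fun i => blk i = j)
      = (Finset.univ.filter (fun i => blk i = j ∧ βs i ≠ 0)) \ T := by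
    intro j
    ext i
    simp only [hS, Finset.mem_filter, Finset.mem_sdiff, Finset.mem_univ, true_and]
    tauto
  have hinner : ∀ j : Fin b,
      ∑ i ∈ (Finset.univ.filter (fun i => blk i = j ∧ βs i ≠ 0)) \ T, βs i ^ 2
        ≤ (((Finset.univ.filter (fun i => blk i = j ∧ βs i ≠ 0)) \ T).card : ℝ) *
          sSup {x : ℝ | ∃ i, blk i = j ∧ βs i ≠ 0 ∧ i ∉ T ∧ x = βs i ^ 2} := by
    intro j
    have hbdd : BddAbove {x : ℝ | ∃ i, blk i = j ∧ βs i ≠ 0 ∧ i ∉ T ∧ x = βs i ^ 2} := by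
      refine Set.Finite.bddAbove (Set.Finite.subset (Set.finite_range (fun i => βs i ^ 2)) ?_)
      rintro x ⟨i, _, _, _, rfl⟩
      exact ⟨i, rfl⟩
    have h := Finset.sum_le_card_nsmul ((Finset.univ.filter (fun i => blk i = j ∧ βs i ≠ 0)) \ T)
      (fun i => βs i ^ 2) (sSup {x : ℝ | ∃ i, blk i = j ∧ βs i ≠ 0 ∧ i ∉ T ∧ x = βs i ^ 2})
      (fun i hi => by
        simp only [Finset.mem_sdiff, Finset.mem_filter, Finset.mem_univ, true_and] at hi
        exact le_csSup hbdd ⟨i, hi.1.1, hi.1.2, hi.2, rfl⟩)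
    simpa [nsmul_eq_mul] using h
  have hcle : c ≤ ∑ j : Fin b,
      ((((Finset.univ.filter (fun i => blk i = j ∧ βs i ≠ 0)) \ T).card : ℝ) *
        sSup {x : ℝ | ∃ i, blk i = j ∧ βs i ≠ 0 ∧ i ∉ T ∧ x = βs i ^ 2}) := by
    rw [hc_eq, hfib]
    refine Finset.sum_le_sum fun j _ => ?_
    rw [hsetj j]
    exact hinner j
  -- combine
  calc ∑ r, (((1 - projM X T) *ᵥ (X *ᵥ v)) r) ^ 2
      ≤ ∑ r, ((X *ᵥ v) r) ^ 2 := step1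
    _ = Q := by rw [hXv, step2]
    _ ≤ (N:ℝ) * lammax A * c := hQle
    _ ≤ (N:ℝ) * lammax A * ∑ j : Fin b,
          ((((Finset.univ.filter (fun i => blk i = j ∧ βs i ≠ 0)) \ T).card : ℝ) *
            sSup {x : ℝ | ∃ i, blk i = j ∧ βs i ≠ 0 ∧ i ∉ T ∧ x = βs i ^ 2}) := by
        exact mul_le_mul_of_nonneg_left hcle (by positivity)
end

section
/- Let ν ≥ 1 be an integer, let Z_1,…,Z_ν be independent standard normal random variables, let m ∈ ℝ^ν with μ = ‖m‖², and set W = Σ_{i=1}^ν (Z_i + m_i)², so that W has the noncentral chi-squared distribution with ν degrees of freedom and noncentrality parameter μ. Then for every real w > μ + ν: P(W > w) ≤ exp( −[ (w + μ)/2 − √( 2w(2μ + ν) − 2μν − ν² ) ] ). (Lemma S2.4, non-asymptotic part: an upper tail bound for noncentral chi-squared random variables obtained by inverting Birgé's deviation inequality.) -/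
open MeasureTheory ProbabilityTheory

open MeasureTheory ProbabilityTheory Real

lemma gauss_key (t mm : ℝ) (ht : t < 1/2) :
    Integrable (fun z => Real.exp (t * (z + mm)^2)) (gaussianReal 0 1) ∧
    ∫ z, Real.exp (t * (z + mm)^2) ∂(gaussianReal 0 1)
      = Real.exp (t * mm^2 / (1 - 2*t)) / Real.sqrt (1 - 2*t) := by
  have hb : (0:ℝ) < 1/2 - t := by linarith
  set b : ℝ := 1/2 - t with hbdef
  set c : ℝ := t * mm / b with hcdef
  set K : ℝ := t * mm^2 / (1 - 2*t) with hKdef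
  have h12t : (1 : ℝ) - 2*t = 2*b := by simp [hbdef]; ring
  -- pointwise identity
  have hpt : ∀ z : ℝ, gaussianPDFReal 0 1 z * Real.exp (t * (z + mm)^2)
      = (Real.sqrt (2*π))⁻¹ * Real.exp (-(b * (z - c)^2) + K) := by
    intro z
    rw [gaussianPDFReal]
    push_cast
    rw [mul_one, mul_assoc, ← Real.exp_add]
    congr 1
    rw [hKdef, hcdef, h12t]
    have hb' : b ≠ 0 := hb.ne'
    congr 1
    field_simp
    rw [hbdef]
    ring
  have hpdfnn : ∀ z : ℝ, 0 ≤ gaussianPDFReal 0 1 z := gaussianPDFReal_nonneg 0 1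
  have hgr : gaussianReal 0 1
      = volume.withDensity (fun x => ENNReal.ofReal (gaussianPDFReal 0 1 x)) := by
    rw [gaussianReal_of_var_ne_zero 0 one_ne_zero]; rfl
  have hconst : ∀ z : ℝ, Real.exp (t * (z + mm)^2) * gaussianPDFReal 0 1 z
      = ((Real.sqrt (2*π))⁻¹ * Real.exp K) * Real.exp (-(b * (z - c)^2)) := by
    intro z
    rw [mul_comm, hpt z, Real.exp_add]
    ring
  have hint_vol : Integrable
      (fun z => Real.exp (t * (z + mm)^2) * gaussianPDFReal 0 1 z) volume := by
    simp_rw [hconst]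
    have : Integrable (fun z : ℝ => Real.exp (-(b * (z - c)^2))) volume := by
      have h0 : Integrable (fun z : ℝ => Real.exp (-b * z^2)) volume :=
        integrable_exp_neg_mul_sq hb
      have := h0.comp_sub_right c
      simpa [neg_mul] using this
    exact this.const_mul _
  have hInt : Integrable (fun z => Real.exp (t * (z + mm)^2)) (gaussianReal 0 1) := by
    rw [hgr, integrable_withDensity_iff (measurable_gaussianPDFReal 0 1).ennreal_ofReal
      (Filter.Eventually.of_forall fun x => ENNReal.ofReal_lt_top)]
    simpa [ENNReal.toReal_ofReal (hpdfnn _)] using hint_vol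
  refine ⟨hInt, ?_⟩
  have hmeasnn : Measurable (fun x => (gaussianPDFReal 0 1 x).toNNReal) :=
    (measurable_gaussianPDFReal 0 1).real_toNNReal
  calc ∫ z, Real.exp (t * (z + mm)^2) ∂(gaussianReal 0 1)
      = ∫ z, (gaussianPDFReal 0 1 z).toNNReal • Real.exp (t * (z + mm)^2) := by
        rw [hgr]
        exact integral_withDensity_eq_integral_smul hmeasnn _
    _ = ∫ z, Real.exp (t * (z + mm)^2) * gaussianPDFReal 0 1 z := by
        refine integral_congr_ae (Filter.Eventually.of_forall fun z => ?_)
        simp only [NNReal.smul_def, Real.coe_toNNReal _ (hpdfnn z), smul_eq_mul, mul_comm]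
    _ = ((Real.sqrt (2*π))⁻¹ * Real.exp K) * ∫ z, Real.exp (-(b * (z - c)^2)) := by
        simp_rw [hconst]
        rw [integral_const_mul]
    _ = ((Real.sqrt (2*π))⁻¹ * Real.exp K) * Real.sqrt (π / b) := by
        congr 1
        have : ∀ z : ℝ, Real.exp (-(b * (z - c)^2)) = Real.exp (-b * (z - c)^2) := by
          intro z; ring_nf
        simp_rw [this]
        rw [integral_sub_right_eq_self (fun z => Real.exp (-b * z^2)) c]
        exact integral_gaussian b
    _ = Real.exp (t * mm^2 / (1 - 2*t)) / Real.sqrt (1 - 2*t) := by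
        have hsq : (Real.sqrt (2*π))⁻¹ * Real.sqrt (π / b) = (Real.sqrt (2*b))⁻¹ := by
          rw [← Real.sqrt_inv, ← Real.sqrt_mul (by positivity : (0:ℝ) ≤ (2*π)⁻¹),
            ← Real.sqrt_inv]
          congr 1
          have hπ : π ≠ 0 := Real.pi_ne_zero
          have hb' : b ≠ 0 := hb.ne'
          field_simp
        calc (Real.sqrt (2*π))⁻¹ * Real.exp K * Real.sqrt (π / b)
            = Real.exp K * ((Real.sqrt (2*π))⁻¹ * Real.sqrt (π / b)) := by ring
          _ = Real.exp K * (Real.sqrt (2*b))⁻¹ := by rw [hsq]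
          _ = Real.exp (t * mm^2 / (1 - 2*t)) / Real.sqrt (1 - 2*t) := by
              rw [← h12t, hKdef]
              ring

open MeasureTheory ProbabilityTheory Real

lemma coord_key {Ω : Type*} [MeasurableSpace Ω] (P : Measure Ω) [IsProbabilityMeasure P]
    (Z : Ω → ℝ) (hZ : Measurable Z) (hl : Measure.map Z P = gaussianReal 0 1)
    (t mm : ℝ) (ht : t < 1/2)
    (hint : Integrable (fun z => Real.exp (t * (z + mm)^2)) (gaussianReal 0 1))
    (hval : ∫ z, Real.exp (t * (z + mm)^2) ∂(gaussianReal 0 1)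
      = Real.exp (t * mm^2 / (1 - 2*t)) / Real.sqrt (1 - 2*t)) :
    Integrable (fun ω => Real.exp (t * (Z ω + mm)^2)) P ∧
    ∫ ω, Real.exp (t * (Z ω + mm)^2) ∂P
      = Real.exp (t * mm^2 / (1 - 2*t)) / Real.sqrt (1 - 2*t) := by
  have hg : AEStronglyMeasurable (fun z : ℝ => Real.exp (t * (z + mm)^2)) (Measure.map Z P) := by
    apply Continuous.aestronglyMeasurable
    fun_prop
  constructor
  · rw [← hl] at hint
    exact (integrable_map_measure hg hZ.aemeasurable).mp hint
  · calc ∫ ω, Real.exp (t * (Z ω + mm)^2) ∂P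
        = ∫ z, Real.exp (t * (z + mm)^2) ∂(Measure.map Z P) :=
          (integral_map hZ.aemeasurable hg).symm
      _ = _ := by rw [hl]; exact hval

lemma aux_rwge (a r w : ℝ) (ha : 0 < a) (haw : a < w) (hr0 : 0 < r) (hw0 : 0 < w)
    (hr2 : r ^ 2 * w = a) : a ≤ r * w := by
  nlinarith [hr2, mul_pos hr0 hw0, ha, haw]

lemma aux_quad (M ν a r w : ℝ) (hM : 0 ≤ M) (hν1 : 1 ≤ ν) (hν0 : 0 ≤ ν) (hadef : a = M + ν)
    (haw : a < w) (hrwge : a ≤ r*w) (hrw2 : (r*w)^2 = a*w) :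
    (r*w - ν/2)^2 ≤ 2 * w * (2 * M + ν) - 2 * M * ν - ν ^ 2 := by
  nlinarith [hrw2, hrwge, hM, hν1, haw, hadef,
    mul_nonneg hM (sub_nonneg.mpr haw.le),
    mul_nonneg hν0 (sub_nonneg.mpr hrwge),
    mul_nonneg hν0 (sub_nonneg.mpr haw.le)]

/-- **Lemma S2.4 (non-asymptotic part).** If `W = ∑_{i=1}^ν (Z_i + m_i)²` with
`Z_1,…,Z_ν` i.i.d. standard normals and `μ = ‖m‖²` (so `W ~ χ²_ν(μ)`), then for every
`w > μ + ν`: `P(W > w) ≤ exp(−[(w + μ)/2 − √(2w(2μ + ν) − 2μν − ν²)])`. -/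
theorem stmt17 {Ω : Type*} [MeasurableSpace Ω] (P : Measure Ω) [IsProbabilityMeasure P]
    (ν : ℕ) (hν : 1 ≤ ν)
    (Z : Fin ν → Ω → ℝ) (hmeas : ∀ i, Measurable (Z i))
    (hindep : iIndepFun Z P)
    (hlaw : ∀ i, Measure.map (Z i) P = gaussianReal 0 1)
    (m : Fin ν → ℝ) (w : ℝ) (hw : (∑ i, m i ^ 2) + ν < w) :
    (P {ω | w < ∑ i, (Z i ω + m i) ^ 2}).toReal ≤
      Real.exp (-((w + ∑ i, m i ^ 2) / 2 -
        Real.sqrt (2 * w * (2 * (∑ i, m i ^ 2) + ν) -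
          2 * (∑ i, m i ^ 2) * ν - (ν : ℝ) ^ 2))) := by
  classical
  set M : ℝ := ∑ i, m i ^ 2 with hMdef
  have hM : 0 ≤ M := Finset.sum_nonneg fun i _ => sq_nonneg _
  have hν1 : (1:ℝ) ≤ ν := by exact_mod_cast hν
  have hν0 : (0:ℝ) ≤ ν := by linarith
  set a : ℝ := M + ν with hadef
  have ha : 0 < a := by rw [hadef]; linarith
  have haw : a < w := hw
  clear_value M a
  have hw0 : 0 < w := ha.trans haw
  set r : ℝ := Real.sqrt (a / w) with hrdef
  have hr0 : 0 < r := Real.sqrt_pos.mpr (div_pos ha hw0)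
  have hr1 : r < 1 := by
    have h : Real.sqrt (a/w) < Real.sqrt 1 :=
      Real.sqrt_lt_sqrt (by positivity) (by rw [div_lt_one hw0]; exact haw)
    simpa [hrdef] using h
  have hr2 : r ^ 2 * w = a := by
    rw [hrdef, Real.sq_sqrt (by positivity : (0:ℝ) ≤ a / w)]
    field_simp
  clear_value r
  set T : ℝ := (1 - r)/2 with hTdef
  have hT0 : 0 < T := by rw [hTdef]; linarith
  have hT2 : T < 1/2 := by rw [hTdef]; linarith
  have h12T : 1 - 2*T = r := by rw [hTdef]; ring
  clear_value T
  -- coordinates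
  set X : Fin ν → Ω → ℝ := fun i ω => (Z i ω + m i)^2 with hXdef
  have hXmeas : ∀ i, Measurable (X i) := fun i => ((hmeas i).add_const (m i)).pow_const 2
  have hXindep : iIndepFun X P :=
    hindep.comp (fun i (z:ℝ) => (z + m i)^2)
      (fun i => (measurable_id.add_const (m i)).pow_const 2)
  have hco : ∀ i, Integrable (fun ω => Real.exp (T * (Z i ω + m i)^2)) P ∧
      ∫ ω, Real.exp (T * (Z i ω + m i)^2) ∂P
        = Real.exp (T * (m i)^2 / (1 - 2*T)) / Real.sqrt (1 - 2*T) := by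
    intro i
    obtain ⟨h1, h2⟩ := gauss_key T (m i) hT2
    exact coord_key P (Z i) (hmeas i) (hlaw i) T (m i) hT2 h1 h2
  have hIntX : ∀ i, Integrable (fun ω => Real.exp (T * X i ω)) P := fun i => (hco i).1
  have hmgfX : ∀ i, mgf (X i) P T = Real.exp (T * (m i)^2 / r) / Real.sqrt r := by
    intro i
    have h := (hco i).2
    rw [h12T] at h
    exact h
  have hIntSum : Integrable (fun ω => Real.exp (T * (∑ i, X i) ω)) P :=
    hXindep.integrable_exp_mul_sum hXmeas (fun i _ => hIntX i)
  have chern : (P {ω | w ≤ (∑ i, X i) ω}).toReal ≤ Real.exp (-T * w) * mgf (∑ i, X i) P T :=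
    measure_ge_le_exp_mul_mgf w hT0.le hIntSum
  have hmono : (P {ω | w < ∑ i, (Z i ω + m i) ^ 2}).toReal
      ≤ (P {ω | w ≤ (∑ i, X i) ω}).toReal := by
    apply ENNReal.toReal_mono (measure_ne_top _ _)
    apply measure_mono
    intro ω hω
    simp only [Set.mem_setOf_eq, Finset.sum_apply, hXdef] at *
    exact le_of_lt hω
  have hprod : mgf (∑ i, X i) P T = Real.exp (T * M / r) / Real.sqrt r ^ (ν:ℕ) := by
    rw [hXindep.mgf_sum hXmeas]
    simp_rw [hmgfX]
    rw [Finset.prod_div_distrib, Finset.prod_const, ← Real.exp_sum]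
    congr 2
    · rw [← Finset.sum_div, ← Finset.mul_sum, hMdef]
    · simp
  -- rewrite sqrt power as exponential
  have hsr : Real.sqrt r ^ (ν:ℕ) = Real.exp ((ν:ℝ) * (Real.log r / 2)) := by
    calc Real.sqrt r ^ (ν:ℕ)
        = Real.exp (Real.log (Real.sqrt r)) ^ (ν:ℕ) := by
          rw [Real.exp_log (Real.sqrt_pos.mpr hr0)]
      _ = Real.exp ((ν:ℝ) * Real.log (Real.sqrt r)) := (Real.exp_nat_mul _ ν).symm
      _ = Real.exp ((ν:ℝ) * (Real.log r / 2)) := by rw [Real.log_sqrt hr0.le]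
  -- numeric facts
  have hlog : -Real.log r ≤ 1/r - 1 := by
    have h := Real.log_le_sub_one_of_pos (show (0:ℝ) < r⁻¹ by positivity)
    rw [Real.log_inv] at h
    rw [one_div]
    linarith
  have hra : a / r = r * w := by
    rw [div_eq_iff hr0.ne']
    nlinarith [hr2]
  have hrwge : a ≤ r * w := aux_rwge a r w ha haw hr0 hw0 hr2
  have hrw2 : (r*w)^2 = a*w := by linear_combination w * hr2
  have hD2 : (r*w - (ν:ℝ)/2)^2 ≤ 2 * w * (2 * M + ν) - 2 * M * ν - (ν : ℝ) ^ 2 := by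
    exact aux_quad M ν a r w hM hν1 hν0 hadef haw hrwge hrw2
  have hsq : r*w - (ν:ℝ)/2 ≤ Real.sqrt (2 * w * (2 * M + ν) - 2 * M * ν - (ν : ℝ) ^ 2) := by
    rcases le_or_gt (r*w - (ν:ℝ)/2) 0 with h|h
    · exact h.trans (Real.sqrt_nonneg _)
    · exact (Real.le_sqrt h.le ((sq_nonneg _).trans hD2)).mpr hD2
  -- exponent inequality
  have h1 : (ν:ℝ)*(-Real.log r) ≤ (ν:ℝ)*(1/r - 1) := mul_le_mul_of_nonneg_left hlog hν0
  have e0 : T*M/r + (ν:ℝ)*(1/r-1)/2 = T*(a/r) := by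
    rw [hTdef, hadef]
    field_simp
  have e1 : T*M/r + (ν:ℝ)*(1/r-1)/2 = T*(r*w) := by rw [e0, hra]
  have e2 : -T*w + T*(r*w) = -(w + a - 2*(r*w))/2 := by
    rw [hTdef]
    linear_combination (-(1:ℝ)/2) * hr2
  calc (P {ω | w < ∑ i, (Z i ω + m i) ^ 2}).toReal
      ≤ Real.exp (-T * w) * mgf (∑ i, X i) P T := hmono.trans chern
    _ = Real.exp (-T*w + T * M / r - (ν:ℝ) * (Real.log r / 2)) := by
        rw [hprod, hsr, ← Real.exp_sub, ← Real.exp_add]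
        congr 1
        ring
    _ ≤ Real.exp (-((w + M) / 2 -
        Real.sqrt (2 * w * (2 * M + ν) - 2 * M * ν - (ν : ℝ) ^ 2))) := by
        apply Real.exp_le_exp.mpr
        have hA : a = M + ν := hadef
        linarith [h1, e1, e2, hsq]
end
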